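/- arXiv:2504.02427 — 4 statements merged into one kernel-verified Lean document; each statement's English description precedes it below -/
import Mathlib

section
/- Let π : A → B be a surjective map between nonempty finite sets and let μ, ρ be probability measures on {0,...,N}^A such that: (1) μ is a π-lift; (2) ρ is sufficiently symmetric, i.e., for each b there is a subgroup G_b of the permutations of π⁻¹(b), acting transitively on π⁻¹(b), such that ρ is invariant under the induced action of ∏_b G_b on {0,...,N}^A; (3) the pushdown of μ is stochastically dominated by the horizontal marginal of ρ. Then μ is stochastically dominated by ρ. -/
open MeasureTheory ProbabilityTheory

/-- `μ` is stochastically dominated by `ν`. -/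
def StochDom {E : Type*} [MeasurableSpace E] [Preorder E] (μ ν : Measure E) : Prop :=
  ∃ κ : Measure (E × E), IsProbabilityMeasure κ ∧ κ.map Prod.fst = μ ∧
    κ.map Prod.snd = ν ∧ κ {q | q.1 ≤ q.2} = 1

section Auxiliary

open Finset
open scoped ENNReal NNReal

section StrassenCore
variable {Ω : Type*} [Fintype Ω] [DecidableEq Ω] [Preorder Ω]

set_option linter.unusedSectionVars false

private lemma route_decomp (p : Ω → NNReal)
    (x₀ : Ω) (ε : NNReal) (hε : ε ≤ p x₀) :
    ∀ x, p x = (p x - (if x = x₀ then ε else 0)) + (if x = x₀ then ε else 0) := by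
  intro x
  by_cases h : x = x₀ <;> simp [h, tsub_add_cancel_of_le, hε]

private lemma sum_route (p p' : Ω → NNReal)
    (x₀ : Ω) (ε : NNReal) (hdec : ∀ x, p x = p' x + (if x = x₀ then ε else 0)) (V : Finset Ω) :
    ∑ x ∈ V, p x = (∑ x ∈ V, p' x) + (if x₀ ∈ V then ε else 0) := by
  calc ∑ x ∈ V, p x = ∑ x ∈ V, (p' x + (if x = x₀ then ε else 0)) :=
        Finset.sum_congr rfl fun x _ => hdec x
    _ = (∑ x ∈ V, p' x) + ∑ x ∈ V, (if x = x₀ then ε else 0) := Finset.sum_add_distrib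
    _ = (∑ x ∈ V, p' x) + (if x₀ ∈ V then ε else 0) := by rw [Finset.sum_ite_eq' V x₀ fun _ => ε]

private lemma route_all (p q : Ω → NNReal) (x₀ y₀ : Ω) (hxy : x₀ ≤ y₀)
    (hup : ∀ U : Finset Ω, (∀ x ∈ U, ∀ y, x ≤ y → y ∈ U) → ∑ x ∈ U, p x ≤ ∑ y ∈ U, q y)
    (ε : NNReal) (hεp : ε ≤ p x₀) (hεq : ε ≤ q y₀)
    (hεd : ∀ U : Finset Ω, (∀ x ∈ U, ∀ y, x ≤ y → y ∈ U) → y₀ ∈ U → x₀ ∉ U →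
      (∑ x ∈ U, p x) + ε ≤ ∑ y ∈ U, q y) :
    ∀ U : Finset Ω, (∀ x ∈ U, ∀ y, x ≤ y → y ∈ U) →
      ∑ x ∈ U, (p x - if x = x₀ then ε else 0) ≤
      ∑ y ∈ U, (q y - if y = y₀ then ε else 0) := by
  intro U hU
  have hp' := sum_route p (fun x => p x - if x = x₀ then ε else 0) x₀ ε (route_decomp p x₀ ε hεp) U
  have hq' := sum_route q (fun y => q y - if y = y₀ then ε else 0) y₀ ε (route_decomp q y₀ ε hεq) U
  by_cases hx : x₀ ∈ U
  · have hy : y₀ ∈ U := hU x₀ hx y₀ hxy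
    rw [if_pos hx] at hp'; rw [if_pos hy] at hq'
    have := hup U hU
    rw [hp', hq'] at this
    exact le_of_add_le_add_right this
  · by_cases hy : y₀ ∈ U
    · rw [if_neg hx, add_zero] at hp'; rw [if_pos hy] at hq'
      have := hεd U hU hy hx
      rw [hp', hq'] at this
      exact le_of_add_le_add_right this
    · rw [if_neg hx, add_zero] at hp'; rw [if_neg hy, add_zero] at hq'
      rw [← hp', ← hq']
      exact hup U hU

private lemma filter_in_upper (U₀ V : Finset Ω)
    (hU₀ : ∀ x ∈ U₀, ∀ y, x ≤ y → y ∈ U₀) (hV : ∀ x ∈ V, ∀ y, x ≤ y → y ∈ V) :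
    ∀ x ∈ V.filter (· ∈ U₀), ∀ y, x ≤ y → y ∈ V.filter (· ∈ U₀) := by
  intro x hx y hxy
  simp only [mem_filter] at hx ⊢
  exact ⟨hV x hx.1 y hxy, hU₀ x hx.2 y hxy⟩

private lemma restrict_in_up (p q : Ω → NNReal) (U₀ : Finset Ω)
    (hU₀ : ∀ x ∈ U₀, ∀ y, x ≤ y → y ∈ U₀)
    (hup : ∀ U : Finset Ω, (∀ x ∈ U, ∀ y, x ≤ y → y ∈ U) → ∑ x ∈ U, p x ≤ ∑ y ∈ U, q y)
    (V : Finset Ω) (hV : ∀ x ∈ V, ∀ y, x ≤ y → y ∈ V) :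
    ∑ x ∈ V, (if x ∈ U₀ then p x else 0) ≤ ∑ y ∈ V, (if y ∈ U₀ then q y else 0) := by
  rw [← Finset.sum_filter, ← Finset.sum_filter]
  exact hup _ (filter_in_upper U₀ V hU₀ hV)

private lemma restrict_in_tot (p q : Ω → NNReal) (U₀ : Finset Ω)
    (htight : ∑ x ∈ U₀, p x = ∑ y ∈ U₀, q y) :
    ∑ x, (if x ∈ U₀ then p x else 0) = ∑ y, (if y ∈ U₀ then q y else 0) := by
  rw [← Finset.sum_filter, ← Finset.sum_filter]
  have h : univ.filter (· ∈ U₀) = U₀ := by ext x; simp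
  rw [h]; exact htight

private lemma sum_out (p : Ω → NNReal) (U₀ V : Finset Ω) :
    ∑ x ∈ V, (if x ∈ U₀ then 0 else p x) = ∑ x ∈ V.filter (fun x => ¬ x ∈ U₀), p x := by
  rw [Finset.sum_filter]
  exact Finset.sum_congr rfl fun x _ => by by_cases h : x ∈ U₀ <;> simp [h]

private lemma split_parts (p q : Ω → NNReal) (U₀ W : Finset Ω) (hsub : U₀ ⊆ W)
    (htight : ∑ x ∈ U₀, p x = ∑ y ∈ U₀, q y)
    (hW : ∑ x ∈ W, p x ≤ ∑ y ∈ W, q y) :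
    ∑ x ∈ W.filter (fun x => ¬ x ∈ U₀), p x ≤ ∑ y ∈ W.filter (fun y => ¬ y ∈ U₀), q y := by
  have hsplit : ∀ f : Ω → NNReal, ∑ x ∈ W, f x
      = ∑ x ∈ U₀, f x + ∑ x ∈ W.filter (fun x => ¬ x ∈ U₀), f x := by
    intro f
    rw [← Finset.sum_filter_add_sum_filter_not W (· ∈ U₀) f]
    congr 2
    ext x; simp only [mem_filter]
    exact ⟨fun h => h.2, fun h => ⟨hsub h, h⟩⟩
  rw [hsplit p, hsplit q, htight] at hW
  exact le_of_add_le_add_left hW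

private lemma restrict_out_up (p q : Ω → NNReal) (U₀ : Finset Ω)
    (hU₀ : ∀ x ∈ U₀, ∀ y, x ≤ y → y ∈ U₀)
    (htight : ∑ x ∈ U₀, p x = ∑ y ∈ U₀, q y)
    (hup : ∀ U : Finset Ω, (∀ x ∈ U, ∀ y, x ≤ y → y ∈ U) → ∑ x ∈ U, p x ≤ ∑ y ∈ U, q y)
    (V : Finset Ω) (hV : ∀ x ∈ V, ∀ y, x ≤ y → y ∈ V) :
    ∑ x ∈ V, (if x ∈ U₀ then 0 else p x) ≤ ∑ y ∈ V, (if y ∈ U₀ then 0 else q y) := by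
  rw [sum_out, sum_out]
  have hWup : ∀ x ∈ V ∪ U₀, ∀ y, x ≤ y → y ∈ V ∪ U₀ := by
    intro x hx y hxy
    rcases Finset.mem_union.1 hx with h | h
    · exact Finset.mem_union.2 (Or.inl (hV x h y hxy))
    · exact Finset.mem_union.2 (Or.inr (hU₀ x h y hxy))
  have key := split_parts p q U₀ (V ∪ U₀) Finset.subset_union_right htight (hup _ hWup)
  have hVU : ∀ f : Ω → NNReal, ∑ x ∈ (V ∪ U₀).filter (fun x => ¬ x ∈ U₀), f x
      = ∑ x ∈ V.filter (fun x => ¬ x ∈ U₀), f x := by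
    intro f; congr 1
    ext x; simp only [mem_filter, Finset.mem_union]
    tauto
  rw [hVU p, hVU q] at key
  exact key

private lemma restrict_out_tot (p q : Ω → NNReal) (U₀ : Finset Ω)
    (htight : ∑ x ∈ U₀, p x = ∑ y ∈ U₀, q y)
    (htot : ∑ x, p x = ∑ y, q y) :
    ∑ x, (if x ∈ U₀ then 0 else p x) = ∑ y, (if y ∈ U₀ then 0 else q y) := by
  have hsplit : ∀ f : Ω → NNReal, ∑ x, f x
      = ∑ x ∈ U₀, f x + ∑ x, (if x ∈ U₀ then 0 else f x) := by
    intro f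
    rw [sum_out, ← Finset.sum_filter_add_sum_filter_not univ (· ∈ U₀) f]
    congr 2
    ext x; simp
  rw [hsplit p, hsplit q, htight] at htot
  exact add_left_cancel htot

theorem strassen_nnreal :
    ∀ (n : ℕ) (p q : Ω → NNReal),
      (univ.filter fun x => p x ≠ 0).card + (univ.filter fun y => q y ≠ 0).card ≤ n →
      (∑ x, p x = ∑ y, q y) →
      (∀ U : Finset Ω, (∀ x ∈ U, ∀ y, x ≤ y → y ∈ U) → ∑ x ∈ U, p x ≤ ∑ y ∈ U, q y) →
      ∃ w : Ω → Ω → NNReal, (∀ x y, w x y ≠ 0 → x ≤ y) ∧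
        (∀ x, ∑ y, w x y = p x) ∧ (∀ y, ∑ x, w x y = q y) := by
  intro n
  induction n with
  | zero =>
      intro p q hcard htot _
      have hp : ∀ x, p x = 0 := by
        intro x; by_contra hx
        have : (univ.filter fun x => p x ≠ 0).Nonempty := ⟨x, by simp [hx]⟩
        have := Finset.card_pos.2 this; omega
      have hq : ∀ y, q y = 0 := by
        intro y; by_contra hy
        have : (univ.filter fun y => q y ≠ 0).Nonempty := ⟨y, by simp [hy]⟩
        have := Finset.card_pos.2 this; omega
      exact ⟨fun _ _ => 0, fun x y h => absurd rfl h, fun x => by simp [hp x],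
        fun y => by simp [hq y]⟩
  | succ n ih =>
      intro p q hcard htot hup
      classical
      by_cases hpz : ∀ x, p x = 0
      · have hq : ∀ y, q y = 0 := by
          intro y
          have h0 : ∑ y, q y = 0 := by
            rw [← htot]; exact Finset.sum_eq_zero fun x _ => hpz x
          by_contra hy
          exact hy (le_antisymm (le_trans (Finset.single_le_sum
            (fun i _ => zero_le) (mem_univ y)) h0.le) zero_le)
        exact ⟨fun _ _ => 0, fun x y h => absurd rfl h, fun x => by simp [hpz x],
          fun y => by simp [hq y]⟩
      push_neg at hpz
      obtain ⟨x₀, hpx₀⟩ := hpz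
      have hx₀mem : x₀ ∈ univ.filter fun x => p x ≠ 0 := by simp [hpx₀]
      -- find y₀ ≥ x₀ in the support of q
      have hUx : ∀ x ∈ univ.filter (x₀ ≤ ·), ∀ y, x ≤ y → y ∈ univ.filter (x₀ ≤ ·) := by
        intro x hx y hxy
        simp only [mem_filter, mem_univ, true_and] at hx ⊢
        exact le_trans hx hxy
      have hsum : p x₀ ≤ ∑ y ∈ univ.filter (x₀ ≤ ·), q y :=
        le_trans (Finset.single_le_sum (fun i _ => zero_le)
          (by simp : x₀ ∈ univ.filter (x₀ ≤ ·))) (hup _ hUx)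
      have hy₀ : ∃ y₀, x₀ ≤ y₀ ∧ q y₀ ≠ 0 := by
        by_contra h
        push_neg at h
        have : ∑ y ∈ univ.filter (x₀ ≤ ·), q y = 0 :=
          Finset.sum_eq_zero fun y hy => h y (by simpa using hy)
        exact hpx₀ (le_antisymm (this ▸ hsum) zero_le)
      obtain ⟨y₀, hxy, hqy₀⟩ := hy₀
      have hy₀mem : y₀ ∈ univ.filter fun y => q y ≠ 0 := by simp [hqy₀]
      have hdid : ∀ U : Finset Ω, (∀ x ∈ U, ∀ y, x ≤ y → y ∈ U) →
          (∑ y ∈ U, q y) = (∑ x ∈ U, p x) + ((∑ y ∈ U, q y) - ∑ x ∈ U, p x) := by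
        intro U hU
        exact (add_tsub_cancel_of_le (hup U hU)).symm
      by_cases hA : ∃ U : Finset Ω, ((∀ x ∈ U, ∀ y, x ≤ y → y ∈ U) ∧ y₀ ∈ U ∧ x₀ ∉ U) ∧
          ((∑ y ∈ U, q y) - ∑ x ∈ U, p x) < min (p x₀) (q y₀)
      · -- Case A : split along a tight (minimal-gap) upper set
        obtain ⟨Uw, hUw, hUwlt⟩ := hA
        set 𝒰 : Finset (Finset Ω) := univ.filter
          (fun U => (∀ x ∈ U, ∀ y, x ≤ y → y ∈ U) ∧ y₀ ∈ U ∧ x₀ ∉ U) with h𝒰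
        have hUwmem : Uw ∈ 𝒰 := by
          rw [h𝒰, Finset.mem_filter]
          exact ⟨mem_univ _, hUw⟩
        obtain ⟨U₀, hU₀mem, hU₀min⟩ := Finset.exists_min_image 𝒰
          (fun U => (∑ y ∈ U, q y) - ∑ x ∈ U, p x) ⟨Uw, hUwmem⟩
        have hU₀ : (∀ x ∈ U₀, ∀ y, x ≤ y → y ∈ U₀) ∧ y₀ ∈ U₀ ∧ x₀ ∉ U₀ := by
          simpa [h𝒰] using hU₀mem
        obtain ⟨hU₀up, hy₀U₀, hx₀U₀⟩ := hU₀
        set ε : NNReal := (∑ y ∈ U₀, q y) - ∑ x ∈ U₀, p x with hε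
        have hεlt : ε < min (p x₀) (q y₀) := lt_of_le_of_lt (hU₀min Uw hUwmem) hUwlt
        have hεp : ε ≤ p x₀ := le_of_lt (lt_of_lt_of_le hεlt (min_le_left _ _))
        have hεq : ε ≤ q y₀ := le_of_lt (lt_of_lt_of_le hεlt (min_le_right _ _))
        have hεd : ∀ U : Finset Ω, (∀ x ∈ U, ∀ y, x ≤ y → y ∈ U) → y₀ ∈ U → x₀ ∉ U →
            (∑ x ∈ U, p x) + ε ≤ ∑ y ∈ U, q y := by
          intro U hU hy hx
          have hUmem : U ∈ 𝒰 := by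
            rw [h𝒰, Finset.mem_filter]
            exact ⟨mem_univ _, hU, hy, hx⟩
          have := hU₀min U hUmem
          calc (∑ x ∈ U, p x) + ε ≤ (∑ x ∈ U, p x) + ((∑ y ∈ U, q y) - ∑ x ∈ U, p x) :=
                add_le_add le_rfl this
            _ = ∑ y ∈ U, q y := (hdid U hU).symm
        set p' : Ω → NNReal := fun x => p x - if x = x₀ then ε else 0 with hp'def
        set q' : Ω → NNReal := fun y => q y - if y = y₀ then ε else 0 with hq'def
        have hdecp : ∀ x, p x = p' x + (if x = x₀ then ε else 0) := route_decomp p x₀ ε hεp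
        have hdecq : ∀ y, q y = q' y + (if y = y₀ then ε else 0) := route_decomp q y₀ ε hεq
        have hup' : ∀ U : Finset Ω, (∀ x ∈ U, ∀ y, x ≤ y → y ∈ U) →
            ∑ x ∈ U, p' x ≤ ∑ y ∈ U, q' y := route_all p q x₀ y₀ hxy hup ε hεp hεq hεd
        have htot' : ∑ x, p' x = ∑ y, q' y := by
          have h1 := sum_route p p' x₀ ε hdecp univ
          have h2 := sum_route q q' y₀ ε hdecq univ
          rw [if_pos (mem_univ x₀)] at h1
          rw [if_pos (mem_univ y₀)] at h2
          have : (∑ x, p' x) + ε = (∑ y, q' y) + ε := by rw [← h1, ← h2]; exact htot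
          exact add_right_cancel this
        -- tightness of U₀ for p', q'
        have htight : ∑ x ∈ U₀, p' x = ∑ y ∈ U₀, q' y := by
          have h1 := sum_route p p' x₀ ε hdecp U₀
          have h2 := sum_route q q' y₀ ε hdecq U₀
          rw [if_neg hx₀U₀, add_zero] at h1
          rw [if_pos hy₀U₀] at h2
          have h3 := hdid U₀ hU₀up
          rw [← hε] at h3
          have : (∑ y ∈ U₀, q' y) + ε = (∑ x ∈ U₀, p' x) + ε := by
            rw [← h2, h3, ← h1]
          exact (add_right_cancel this).symm
        -- support bookkeeping
        have hsubp : ∀ x, p' x ≠ 0 → p x ≠ 0 := by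
          intro x h hc
          exact h (le_antisymm (le_trans tsub_le_self hc.le) zero_le)
        have hsubq : ∀ y, q' y ≠ 0 → q y ≠ 0 := by
          intro y h hc
          exact h (le_antisymm (le_trans tsub_le_self hc.le) zero_le)
        -- subproblem 1 : restriction to U₀
        set p₁ : Ω → NNReal := fun x => if x ∈ U₀ then p' x else 0 with hp₁def
        set q₁ : Ω → NNReal := fun y => if y ∈ U₀ then q' y else 0 with hq₁def
        have hcard₁ : (univ.filter fun x => p₁ x ≠ 0).card +
            (univ.filter fun y => q₁ y ≠ 0).card ≤ n := by
          have hs1 : (univ.filter fun x => p₁ x ≠ 0) ⊆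
              (univ.filter fun x => p x ≠ 0).erase x₀ := by
            intro x hx
            simp only [mem_filter, mem_univ, true_and, hp₁def] at hx
            by_cases hmem : x ∈ U₀
            · rw [if_pos hmem] at hx
              refine Finset.mem_erase.2 ⟨fun hcon => hx₀U₀ (hcon ▸ hmem), ?_⟩
              simp [hsubp x hx]
            · rw [if_neg hmem] at hx; exact absurd rfl hx
          have hs2 : (univ.filter fun y => q₁ y ≠ 0) ⊆ (univ.filter fun y => q y ≠ 0) := by
            intro y hy
            simp only [mem_filter, mem_univ, true_and, hq₁def] at hy ⊢
            by_cases hmem : y ∈ U₀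
            · rw [if_pos hmem] at hy; exact hsubq y hy
            · rw [if_neg hmem] at hy; exact absurd rfl hy
          have h1 := Finset.card_le_card hs1
          have h2 := Finset.card_le_card hs2
          have h3 := Finset.card_erase_lt_of_mem hx₀mem
          omega
        obtain ⟨w₁, hw₁le, hw₁row, hw₁col⟩ := ih p₁ q₁ hcard₁
          (restrict_in_tot p' q' U₀ htight)
          (fun V hV => restrict_in_up p' q' U₀ hU₀up hup' V hV)
        -- subproblem 2 : restriction to complement
        set p₂ : Ω → NNReal := fun x => if x ∈ U₀ then 0 else p' x with hp₂def
        set q₂ : Ω → NNReal := fun y => if y ∈ U₀ then 0 else q' y with hq₂def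
        have hcard₂ : (univ.filter fun x => p₂ x ≠ 0).card +
            (univ.filter fun y => q₂ y ≠ 0).card ≤ n := by
          have hs1 : (univ.filter fun x => p₂ x ≠ 0) ⊆ (univ.filter fun x => p x ≠ 0) := by
            intro x hx
            simp only [mem_filter, mem_univ, true_and, hp₂def] at hx ⊢
            by_cases hmem : x ∈ U₀
            · rw [if_pos hmem] at hx; exact absurd rfl hx
            · rw [if_neg hmem] at hx; exact hsubp x hx
          have hs2 : (univ.filter fun y => q₂ y ≠ 0) ⊆
              (univ.filter fun y => q y ≠ 0).erase y₀ := by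
            intro y hy
            simp only [mem_filter, mem_univ, true_and, hq₂def] at hy
            by_cases hmem : y ∈ U₀
            · rw [if_pos hmem] at hy; exact absurd rfl hy
            · rw [if_neg hmem] at hy
              refine Finset.mem_erase.2 ⟨fun hcon => hmem (hcon ▸ hy₀U₀), ?_⟩
              simp [hsubq y hy]
          have h1 := Finset.card_le_card hs1
          have h2 := Finset.card_le_card hs2
          have h3 := Finset.card_erase_lt_of_mem hy₀mem
          omega
        obtain ⟨w₂, hw₂le, hw₂row, hw₂col⟩ := ih p₂ q₂ hcard₂
          (restrict_out_tot p' q' U₀ htight htot')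
          (fun V hV => restrict_out_up p' q' U₀ hU₀up htight hup' V hV)
        -- combine
        refine ⟨fun x y => (if x = x₀ ∧ y = y₀ then ε else 0) + w₁ x y + w₂ x y, ?_, ?_, ?_⟩
        · intro x y h
          by_contra hle
          apply h
          dsimp only
          have h1 : w₁ x y = 0 := by
            by_contra hc; exact hle (hw₁le x y hc)
          have h2 : w₂ x y = 0 := by
            by_contra hc; exact hle (hw₂le x y hc)
          have h3 : (if x = x₀ ∧ y = y₀ then ε else 0) = 0 := by
            rw [if_neg]
            rintro ⟨rfl, rfl⟩
            exact hle hxy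
          rw [h1, h2, h3]; simp
        · intro x
          dsimp only
          rw [Finset.sum_add_distrib, Finset.sum_add_distrib, hw₁row x, hw₂row x]
          have hite : ∑ y, (if x = x₀ ∧ y = y₀ then ε else 0) = if x = x₀ then ε else 0 := by
            by_cases hx : x = x₀
            · subst hx
              simp only [true_and, if_pos]
              rw [Finset.sum_ite_eq' univ y₀ fun _ => ε]
              simp
            · simp [hx]
          rw [hite]
          have h2 : p₁ x + p₂ x = p' x := by
            by_cases hmem : x ∈ U₀ <;> simp [hp₁def, hp₂def, hmem]
          calc (if x = x₀ then ε else 0) + p₁ x + p₂ x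
              = p₁ x + p₂ x + (if x = x₀ then ε else 0) := by ring
            _ = p' x + (if x = x₀ then ε else 0) := by rw [h2]
            _ = p x := (hdecp x).symm
        · intro y
          dsimp only
          rw [Finset.sum_add_distrib, Finset.sum_add_distrib, hw₁col y, hw₂col y]
          have hite : ∑ x, (if x = x₀ ∧ y = y₀ then ε else 0) = if y = y₀ then ε else 0 := by
            by_cases hy : y = y₀
            · subst hy
              simp only [and_true, if_pos]
              rw [Finset.sum_ite_eq' univ x₀ fun _ => ε]
              simp
            · simp [hy]
          rw [hite]
          have h2 : q₁ y + q₂ y = q' y := by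
            by_cases hmem : y ∈ U₀ <;> simp [hq₁def, hq₂def, hmem]
          calc (if y = y₀ then ε else 0) + q₁ y + q₂ y
              = q₁ y + q₂ y + (if y = y₀ then ε else 0) := by ring
            _ = q' y + (if y = y₀ then ε else 0) := by rw [h2]
            _ = q y := (hdecq y).symm
      · -- Case B : route the full amount min (p x₀) (q y₀)
        push_neg at hA
        set ε : NNReal := min (p x₀) (q y₀) with hε
        have hεp : ε ≤ p x₀ := min_le_left _ _
        have hεq : ε ≤ q y₀ := min_le_right _ _
        have hεd : ∀ U : Finset Ω, (∀ x ∈ U, ∀ y, x ≤ y → y ∈ U) → y₀ ∈ U → x₀ ∉ U →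
            (∑ x ∈ U, p x) + ε ≤ ∑ y ∈ U, q y := by
          intro U hU hy hx
          have := hA U ⟨hU, hy, hx⟩
          calc (∑ x ∈ U, p x) + ε ≤ (∑ x ∈ U, p x) + ((∑ y ∈ U, q y) - ∑ x ∈ U, p x) :=
                add_le_add le_rfl this
            _ = ∑ y ∈ U, q y := (hdid U hU).symm
        set p' : Ω → NNReal := fun x => p x - if x = x₀ then ε else 0 with hp'def
        set q' : Ω → NNReal := fun y => q y - if y = y₀ then ε else 0 with hq'def
        have hdecp : ∀ x, p x = p' x + (if x = x₀ then ε else 0) := route_decomp p x₀ ε hεp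
        have hdecq : ∀ y, q y = q' y + (if y = y₀ then ε else 0) := route_decomp q y₀ ε hεq
        have hup' : ∀ U : Finset Ω, (∀ x ∈ U, ∀ y, x ≤ y → y ∈ U) →
            ∑ x ∈ U, p' x ≤ ∑ y ∈ U, q' y := route_all p q x₀ y₀ hxy hup ε hεp hεq hεd
        have htot' : ∑ x, p' x = ∑ y, q' y := by
          have h1 := sum_route p p' x₀ ε hdecp univ
          have h2 := sum_route q q' y₀ ε hdecq univ
          rw [if_pos (mem_univ x₀)] at h1
          rw [if_pos (mem_univ y₀)] at h2
          have : (∑ x, p' x) + ε = (∑ y, q' y) + ε := by rw [← h1, ← h2]; exact htot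
          exact add_right_cancel this
        have hsubp : ∀ x, p' x ≠ 0 → p x ≠ 0 := by
          intro x h hc
          exact h (le_antisymm (le_trans tsub_le_self hc.le) zero_le)
        have hsubq : ∀ y, q' y ≠ 0 → q y ≠ 0 := by
          intro y h hc
          exact h (le_antisymm (le_trans tsub_le_self hc.le) zero_le)
        have hcard' : (univ.filter fun x => p' x ≠ 0).card +
            (univ.filter fun y => q' y ≠ 0).card ≤ n := by
          rcases le_total (p x₀) (q y₀) with h | h
          · have hzero : p' x₀ = 0 := by
              simp [hp'def, hε, min_eq_left h]
            have hs1 : (univ.filter fun x => p' x ≠ 0) ⊆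
                (univ.filter fun x => p x ≠ 0).erase x₀ := by
              intro x hx
              simp only [mem_filter, mem_univ, true_and] at hx
              refine Finset.mem_erase.2 ⟨fun hcon => hx (hcon ▸ hzero), ?_⟩
              simp [hsubp x hx]
            have hs2 : (univ.filter fun y => q' y ≠ 0) ⊆ (univ.filter fun y => q y ≠ 0) := by
              intro y hy
              simp only [mem_filter, mem_univ, true_and] at hy ⊢
              exact hsubq y hy
            have h1 := Finset.card_le_card hs1
            have h2 := Finset.card_le_card hs2
            have h3 := Finset.card_erase_lt_of_mem hx₀mem
            omega
          · have hzero : q' y₀ = 0 := by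
              simp [hq'def, hε, min_eq_right h]
            have hs1 : (univ.filter fun x => p' x ≠ 0) ⊆ (univ.filter fun x => p x ≠ 0) := by
              intro x hx
              simp only [mem_filter, mem_univ, true_and] at hx ⊢
              exact hsubp x hx
            have hs2 : (univ.filter fun y => q' y ≠ 0) ⊆
                (univ.filter fun y => q y ≠ 0).erase y₀ := by
              intro y hy
              simp only [mem_filter, mem_univ, true_and] at hy
              refine Finset.mem_erase.2 ⟨fun hcon => hy (hcon ▸ hzero), ?_⟩
              simp [hsubq y hy]
            have h1 := Finset.card_le_card hs1
            have h2 := Finset.card_le_card hs2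
            have h3 := Finset.card_erase_lt_of_mem hy₀mem
            omega
        obtain ⟨w', hw'le, hw'row, hw'col⟩ := ih p' q' hcard' htot' hup'
        refine ⟨fun x y => (if x = x₀ ∧ y = y₀ then ε else 0) + w' x y, ?_, ?_, ?_⟩
        · intro x y h
          by_contra hle
          apply h
          dsimp only
          have h1 : w' x y = 0 := by
            by_contra hc; exact hle (hw'le x y hc)
          have h3 : (if x = x₀ ∧ y = y₀ then ε else 0) = 0 := by
            rw [if_neg]
            rintro ⟨rfl, rfl⟩
            exact hle hxy
          rw [h1, h3]; simp
        · intro x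
          dsimp only
          rw [Finset.sum_add_distrib, hw'row x]
          have hite : ∑ y, (if x = x₀ ∧ y = y₀ then ε else 0) = if x = x₀ then ε else 0 := by
            by_cases hx : x = x₀
            · subst hx
              simp only [true_and, if_pos]
              rw [Finset.sum_ite_eq' univ y₀ fun _ => ε]
              simp
            · simp [hx]
          rw [hite, add_comm]
          exact (hdecp x).symm
        · intro y
          dsimp only
          rw [Finset.sum_add_distrib, hw'col y]
          have hite : ∑ x, (if x = x₀ ∧ y = y₀ then ε else 0) = if y = y₀ then ε else 0 := by
            by_cases hy : y = y₀
            · subst hy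
              simp only [and_true, if_pos]
              rw [Finset.sum_ite_eq' univ x₀ fun _ => ε]
              simp
            · simp [hy]
          rw [hite, add_comm]
          exact (hdecq y).symm

end StrassenCore

section Count

open scoped Classical

variable {B V : Type*} [Fintype B] [DecidableEq B] [LinearOrder V]
variable {P : B → Type*} [∀ b, Fintype (P b)]
variable {Γ : B → Type*} [∀ b, Fintype (Γ b)]

/-- Reading along the distinguished section `p₀` catches no more group elements than
reading along the (member-dependent) witness sections. -/
private theorem countS (val : ∀ b, Γ b → P b → V) (p₀ : ∀ b, P b)
    (hom : ∀ (b) (a : P b) (c : V),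
      (univ.filter fun γ : Γ b => c ≤ val b γ a).card =
      (univ.filter fun γ : Γ b => c ≤ val b γ (p₀ b)).card)
    (W : Finset ((∀ b, V) × (∀ b, P b))) :
    (univ.filter fun γ : ∀ b, Γ b => ∃ w ∈ W, ∀ b, w.1 b ≤ val b (γ b) (p₀ b)).card ≤
    (univ.filter fun γ : ∀ b, Γ b => ∃ w ∈ W, ∀ b, w.1 b ≤ val b (γ b) (w.2 b)).card := by
  obtain ⟨pred, hpred⟩ : ∃ pred : Finset B → (∀ b, Γ b) → Prop, pred = fun T γ =>
      ∃ w ∈ W, ∀ b, w.1 b ≤ val b (γ b) (if b ∈ T then w.2 b else p₀ b) := ⟨_, rfl⟩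
  -- the interpolation step
  have step : ∀ (j : B) (T : Finset B), j ∉ T →
      (univ.filter (pred T)).card ≤ (univ.filter (pred (insert j T))).card := by
    intro j T hj
    set m : Γ j → (∀ b : {b // b ≠ j}, Γ b) → (∀ b, Γ b) :=
      fun x γ' => (Equiv.piSplitAt j Γ).symm (x, γ') with hm
    have hmj : ∀ x γ', m x γ' j = x := fun x γ' => dif_pos rfl
    have hmne : ∀ x γ' (b : B) (hb : b ≠ j), m x γ' b = γ' ⟨b, hb⟩ :=
      fun x γ' b hb => dif_neg hb
    have card_split : ∀ (pr : (∀ b, Γ b) → Prop),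
        (univ.filter pr).card =
          ∑ γ' : ∀ b : {b // b ≠ j}, Γ b, (univ.filter fun x : Γ j => pr (m x γ')).card := by
      intro pr
      rw [Finset.card_filter]
      rw [← Equiv.sum_comp (Equiv.piSplitAt j Γ).symm (fun γ => if pr γ then (1:ℕ) else 0)]
      rw [Fintype.sum_prod_type]
      rw [Finset.sum_comm]
      exact Finset.sum_congr rfl fun γ' _ => (Finset.card_filter _ _).symm
    rw [card_split (pred T), card_split (pred (insert j T))]
    apply Finset.sum_le_sum
    intro γ' _
    set C : Finset ((∀ b, V) × (∀ b, P b)) := W.filter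
      (fun w => ∀ b : {b // b ≠ j},
        w.1 ↑b ≤ val ↑b (γ' b) (if (↑b : B) ∈ T then w.2 ↑b else p₀ ↑b)) with hC
    have hiff1 : ∀ x : Γ j, pred T (m x γ') ↔ ∃ w ∈ C, w.1 j ≤ val j x (p₀ j) := by
      intro x
      rw [hpred]
      constructor
      · rintro ⟨w, hw, hall⟩
        refine ⟨w, Finset.mem_filter.2 ⟨hw, fun b => ?_⟩, ?_⟩
        · have := hall ↑b
          rwa [hmne x γ' ↑b b.2] at this
        · have := hall j
          rwa [hmj, if_neg hj] at this
      · rintro ⟨w, hw, hx⟩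
        obtain ⟨hwW, hwC⟩ := Finset.mem_filter.1 hw
        refine ⟨w, hwW, fun b => ?_⟩
        by_cases hb : b = j
        · subst hb
          rwa [hmj, if_neg hj]
        · rw [hmne x γ' b hb]
          exact hwC ⟨b, hb⟩
    have hiff2 : ∀ x : Γ j, pred (insert j T) (m x γ') ↔ ∃ w ∈ C, w.1 j ≤ val j x (w.2 j) := by
      intro x
      rw [hpred]
      constructor
      · rintro ⟨w, hw, hall⟩
        refine ⟨w, Finset.mem_filter.2 ⟨hw, fun b => ?_⟩, ?_⟩
        · have := hall ↑b
          rw [hmne x γ' ↑b b.2] at this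
          simpa only [Finset.mem_insert, or_iff_right b.2] using this
        · have := hall j
          rwa [hmj, if_pos (Finset.mem_insert_self j T)] at this
      · rintro ⟨w, hw, hx⟩
        obtain ⟨hwW, hwC⟩ := Finset.mem_filter.1 hw
        refine ⟨w, hwW, fun b => ?_⟩
        by_cases hb : b = j
        · subst hb
          rwa [hmj, if_pos (Finset.mem_insert_self b T)]
        · rw [hmne x γ' b hb]
          simpa only [Finset.mem_insert, or_iff_right hb] using hwC ⟨b, hb⟩
    have e1 : (univ.filter fun x : Γ j => pred T (m x γ')) =
        (univ.filter fun x : Γ j => ∃ w ∈ C, w.1 j ≤ val j x (p₀ j)) :=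
      Finset.filter_congr fun x _ => by rw [hiff1 x]
    have e2 : (univ.filter fun x : Γ j => pred (insert j T) (m x γ')) =
        (univ.filter fun x : Γ j => ∃ w ∈ C, w.1 j ≤ val j x (w.2 j)) :=
      Finset.filter_congr fun x _ => by rw [hiff2 x]
    rw [e1, e2]
    rcases C.eq_empty_or_nonempty with hCe | hCne
    · simp [hCe]
    · obtain ⟨w₀, hw₀C, hw₀min⟩ := Finset.exists_min_image C (fun w => w.1 j) hCne
      have e3 : (univ.filter fun x : Γ j => ∃ w ∈ C, w.1 j ≤ val j x (p₀ j)) =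
          (univ.filter fun x : Γ j => w₀.1 j ≤ val j x (p₀ j)) := by
        apply Finset.filter_congr
        intro x _
        constructor
        · rintro ⟨w, hwC, hle⟩
          exact le_trans (hw₀min w hwC) hle
        · intro h
          exact ⟨w₀, hw₀C, h⟩
      rw [e3, hom j (w₀.2 j) (w₀.1 j) |>.symm]
      apply Finset.card_le_card
      intro x hx
      simp only [Finset.mem_filter] at hx ⊢
      exact ⟨hx.1, w₀, hw₀C, hx.2⟩
  -- induction over the frozen set
  have main : ∀ T : Finset B, (univ.filter (pred ∅)).card ≤ (univ.filter (pred T)).card := by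
    intro T
    induction T using Finset.induction_on with
    | empty => exact le_refl _
    | insert _ _ hj ih => exact le_trans ih (step _ _ hj)
  have h0 : (univ.filter fun γ : ∀ b, Γ b => ∃ w ∈ W, ∀ b, w.1 b ≤ val b (γ b) (p₀ b)) =
      univ.filter (pred ∅) := by
    apply Finset.filter_congr
    intro γ _
    simp [hpred]
  have h1 : (univ.filter fun γ : ∀ b, Γ b => ∃ w ∈ W, ∀ b, w.1 b ≤ val b (γ b) (w.2 b)) =
      univ.filter (pred univ) := by
    apply Finset.filter_congr
    intro γ _
    simp [hpred]
  rw [h0, h1]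
  exact main univ

end Count

section MeasHelp
variable {α : Type*} [Fintype α] [MeasurableSpace α] [MeasurableSingletonClass α]

private lemma allMeasurable (s : Set α) : MeasurableSet s := (Set.toFinite s).measurableSet

private lemma meas_eq_sum [DecidableEq α] (m : Measure α) (S : Set α)
    [DecidablePred (· ∈ S)] :
    m S = ∑ x ∈ Finset.univ.filter (· ∈ S), m {x} := by
  have hS : S = ⋃ x ∈ Finset.univ.filter (· ∈ S), ({x} : Set α) := by
    ext y; simp
  conv_lhs => rw [hS]
  rw [measure_biUnion_finset]
  · intro x _ y _ hxy
    simp [Function.onFun, Set.disjoint_singleton, hxy]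
  · exact fun b _ => measurableSet_singleton b

private lemma meas_finset [DecidableEq α] (m : Measure α) (S : Finset α) :
    m ↑S = ∑ x ∈ S, m {x} := by
  classical
  rw [meas_eq_sum m ↑S]
  congr 1
  ext x; simp

end MeasHelp

private lemma stochDom_mono {α : Type*} [Fintype α] [MeasurableSpace α]
    [MeasurableSingletonClass α] [Preorder α]
    {μ ν : Measure α}
    (h : StochDom μ ν) {S : Set α} (hS : IsUpperSet S) : μ S ≤ ν S := by
  obtain ⟨κ, hκ, h1, h2, hle⟩ := h
  have hmS : MeasurableSet S := allMeasurable S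
  have hK : κ {q : α × α | q.1 ≤ q.2}ᶜ = 0 := by
    have := measure_compl (allMeasurable {q : α × α | q.1 ≤ q.2}) (measure_ne_top κ _)
    rw [hle] at this
    simp [this, measure_univ]
  have hsub : (Prod.fst ⁻¹' S : Set (α × α)) ⊆ (Prod.snd ⁻¹' S) ∪ {q : α × α | q.1 ≤ q.2}ᶜ := by
    intro z hz
    by_cases hzle : z.1 ≤ z.2
    · exact Or.inl (hS hzle hz)
    · exact Or.inr hzle
  calc μ S = κ (Prod.fst ⁻¹' S) := by rw [← h1, Measure.map_apply measurable_fst hmS]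
    _ ≤ κ ((Prod.snd ⁻¹' S) ∪ {q : α × α | q.1 ≤ q.2}ᶜ) := measure_mono hsub
    _ ≤ κ (Prod.snd ⁻¹' S) + κ ({q : α × α | q.1 ≤ q.2}ᶜ) := measure_union_le _ _
    _ = ν S := by rw [hK, add_zero, ← Measure.map_apply measurable_snd hmS, h2]

private lemma stochDom_of_upper {α : Type*} [Fintype α] [DecidableEq α] [MeasurableSpace α]
    [MeasurableSingletonClass α] [Preorder α]
    (μ ν : Measure α) [IsProbabilityMeasure μ] [IsProbabilityMeasure ν]
    (h : ∀ U : Set α, IsUpperSet U → μ U ≤ ν U) : StochDom μ ν := by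
  classical
  set p : α → NNReal := fun x => (μ {x}).toNNReal with hpdef
  set q : α → NNReal := fun y => (ν {y}).toNNReal with hqdef
  have hp : ∀ x, μ {x} = (p x : ℝ≥0∞) := fun x => (ENNReal.coe_toNNReal (measure_ne_top μ _)).symm
  have hq : ∀ y, ν {y} = (q y : ℝ≥0∞) := fun y => (ENNReal.coe_toNNReal (measure_ne_top ν _)).symm
  have hμS : ∀ S : Finset α, μ ↑S = ((∑ x ∈ S, p x : NNReal) : ℝ≥0∞) := by
    intro S
    rw [meas_finset μ S, ENNReal.coe_finset_sum]
    exact Finset.sum_congr rfl fun x _ => hp x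
  have hνS : ∀ S : Finset α, ν ↑S = ((∑ y ∈ S, q y : NNReal) : ℝ≥0∞) := by
    intro S
    rw [meas_finset ν S, ENNReal.coe_finset_sum]
    exact Finset.sum_congr rfl fun y _ => hq y
  have htot : ∑ x, p x = ∑ y, q y := by
    have h1 : μ ↑(univ : Finset α) = ν ↑(univ : Finset α) := by
      rw [Finset.coe_univ]
      simp [measure_univ]
    rw [hμS, hνS] at h1
    exact_mod_cast h1
  have hupFin : ∀ U : Finset α, (∀ x ∈ U, ∀ y, x ≤ y → y ∈ U) →
      ∑ x ∈ U, p x ≤ ∑ y ∈ U, q y := by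
    intro U hU
    have hUp : IsUpperSet (↑U : Set α) := by
      intro a b hab ha
      exact hU a ha b hab
    have := h ↑U hUp
    rw [hμS, hνS] at this
    exact_mod_cast this
  obtain ⟨w, hwle, hwrow, hwcol⟩ := strassen_nnreal _ p q le_rfl htot hupFin
  set κ : Measure (α × α) := ∑ z ∈ (univ : Finset (α × α)),
    ((w z.1 z.2 : ℝ≥0∞) • Measure.dirac z) with hκdef
  have κap : ∀ S : Set (α × α), κ S =
      ∑ z : α × α, (w z.1 z.2 : ℝ≥0∞) * (if z ∈ S then 1 else 0) := by
    intro S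
    rw [hκdef, Measure.finset_sum_apply]
    refine Finset.sum_congr rfl fun z _ => ?_
    rw [Measure.smul_apply, Measure.dirac_apply, smul_eq_mul]
    simp [Set.indicator_apply]
  have hrowE : ∀ x, ∑ y, (w x y : ℝ≥0∞) = (p x : ℝ≥0∞) := by
    intro x
    rw [← ENNReal.coe_finset_sum, hwrow x]
  have hcolE : ∀ y, ∑ x, (w x y : ℝ≥0∞) = (q y : ℝ≥0∞) := by
    intro y
    rw [← ENNReal.coe_finset_sum, hwcol y]
  have hmapfst : κ.map Prod.fst = μ := by
    apply Measure.ext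
    intro S hS
    rw [Measure.map_apply measurable_fst hS, κap, meas_eq_sum μ S]
    rw [Fintype.sum_prod_type]
    calc ∑ x, ∑ y, (w x y : ℝ≥0∞) * (if (x, y) ∈ Prod.fst ⁻¹' S then 1 else 0)
        = ∑ x, (if x ∈ S then 1 else 0) * ∑ y, (w x y : ℝ≥0∞) := by
          refine Finset.sum_congr rfl fun x _ => ?_
          rw [Finset.mul_sum]
          refine Finset.sum_congr rfl fun y _ => ?_
          simp only [Set.mem_preimage]
          ring
      _ = ∑ x ∈ Finset.univ.filter (· ∈ S), μ {x} := by
          rw [Finset.sum_filter]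
          refine Finset.sum_congr rfl fun x _ => ?_
          rw [hrowE x, ← hp x]
          by_cases hx : x ∈ S <;> simp [hx]
  have hmapsnd : κ.map Prod.snd = ν := by
    apply Measure.ext
    intro S hS
    rw [Measure.map_apply measurable_snd hS, κap, meas_eq_sum ν S]
    rw [Fintype.sum_prod_type]
    calc ∑ x, ∑ y, (w x y : ℝ≥0∞) * (if (x, y) ∈ Prod.snd ⁻¹' S then 1 else 0)
        = ∑ y, (if y ∈ S then 1 else 0) * ∑ x, (w x y : ℝ≥0∞) := by
          rw [Finset.sum_comm]
          refine Finset.sum_congr rfl fun y _ => ?_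
          rw [Finset.mul_sum]
          refine Finset.sum_congr rfl fun x _ => ?_
          simp only [Set.mem_preimage]
          ring
      _ = ∑ y ∈ Finset.univ.filter (· ∈ S), ν {y} := by
          rw [Finset.sum_filter]
          refine Finset.sum_congr rfl fun y _ => ?_
          rw [hcolE y, ← hq y]
          by_cases hy : y ∈ S <;> simp [hy]
  have hκle : κ {z : α × α | z.1 ≤ z.2} = 1 := by
    rw [κap]
    have : ∀ z : α × α, (w z.1 z.2 : ℝ≥0∞) * (if z ∈ {z : α × α | z.1 ≤ z.2} then 1 else 0)
        = (w z.1 z.2 : ℝ≥0∞) := by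
      intro z
      by_cases hz : z.1 ≤ z.2
      · simp [Set.mem_setOf_eq, hz]
      · have : w z.1 z.2 = 0 := by
          by_contra hc
          exact hz (hwle z.1 z.2 hc)
        simp [this]
    rw [Finset.sum_congr rfl fun z _ => this z]
    rw [Fintype.sum_prod_type]
    calc ∑ x, ∑ y, (w x y : ℝ≥0∞) = ∑ x, (p x : ℝ≥0∞) :=
          Finset.sum_congr rfl fun x _ => hrowE x
      _ = μ (↑(univ : Finset α)) := by
          rw [hμS univ, ENNReal.coe_finset_sum]
      _ = 1 := by rw [Finset.coe_univ]; exact measure_univ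
  have hκprob : IsProbabilityMeasure κ := by
    constructor
    rw [κap]
    simp only [Set.mem_univ, if_true, mul_one]
    calc ∑ z : α × α, (w z.1 z.2 : ℝ≥0∞)
        = ∑ x, ∑ y, (w x y : ℝ≥0∞) := Fintype.sum_prod_type _
      _ = ∑ x, (p x : ℝ≥0∞) := Finset.sum_congr rfl fun x _ => hrowE x
      _ = μ (↑(univ : Finset α)) := by rw [hμS univ, ENNReal.coe_finset_sum]
      _ = 1 := by rw [Finset.coe_univ]; exact measure_univ
  exact ⟨κ, hκprob, hmapfst, hmapsnd, hκle⟩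

end Auxiliary


open Finset in
open scoped ENNReal NNReal in
/-- **Corollary (sufficiently symmetric target).**  If `μ` is a `π`-lift, `ρ` is
sufficiently symmetric, and the pushdown of `μ` is dominated by the horizontal marginal
of `ρ` (i.e. by the `s`-marginal for every section `s`), then `μ` is dominated by `ρ`. -/
theorem stmt7 (N : ℕ)
    {A B : Type*} [Fintype A] [Nonempty A] [DecidableEq A] [Fintype B] [Nonempty B]
    [DecidableEq B]
    (π : A → B) (hπ : Function.Surjective π)
    (μ ρ : Measure (A → Fin (N + 1)))
    [IsProbabilityMeasure μ] [IsProbabilityMeasure ρ]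
    -- (1) `μ` is a `π`-lift
    (hlift : μ {x | ∀ a a' : A, π a = π a' → x a ≠ 0 → x a' ≠ 0 → a = a'} = 1)
    -- (2) `ρ` is sufficiently symmetric
    (G : (b : B) → Subgroup (Equiv.Perm {a : A // π a = b}))
    (htrans : ∀ b : B, ∀ a₁ a₂ : {a : A // π a = b}, ∃ g ∈ G b, g a₁ = a₂)
    (hinv : ∀ σ : (b : B) → Equiv.Perm {a : A // π a = b}, (∀ b, σ b ∈ G b) →
      ρ.map (fun x a => x (((σ (π a)).symm ⟨a, rfl⟩ : {c : A // π c = π a}) : A)) = ρ)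
    -- (3) the pushdown of `μ` is dominated by the horizontal marginal of `ρ`
    (hpush : ∀ s : B → A, (∀ b, π (s b) = b) →
      StochDom
        (μ.map fun x b => (Finset.univ.filter fun c => π c = b).sup x)
        (ρ.map fun x b => x (s b))) :
    StochDom μ ρ := by
  classical
  apply stochDom_of_upper
  intro U hU
  -- fixed section s₀
  have hs₀ : ∀ b, π (Function.surjInv hπ b) = b := fun b => Function.surjInv_eq hπ b
  set s₀ : B → A := Function.surjInv hπ with hs₀def
  -- notation
  set M : (A → Fin (N + 1)) → (B → Fin (N + 1)) :=
    fun x b => (Finset.univ.filter fun c => π c = b).sup x with hM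
  set ι : (B → A) → (B → Fin (N + 1)) → (A → Fin (N + 1)) :=
    fun t z a => if t (π a) = a then z (π a) else 0 with hι
  have hιmono : ∀ (t : B → A) (z z' : B → Fin (N + 1)), z ≤ z' → ι t z ≤ ι t z' := by
    intro t z z' hzz' a
    rw [hι]
    dsimp only
    by_cases h : t (π a) = a
    · rw [if_pos h, if_pos h]; exact hzz' (π a)
    · rw [if_neg h, if_neg h]
  set E : Set (B → Fin (N + 1)) :=
    {z | ∃ t : B → A, (∀ b, π (t b) = b) ∧ ι t z ∈ U} with hE
  have hEup : IsUpperSet E := by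
    rintro z z' hzz' ⟨t, ht, htU⟩
    exact ⟨t, ht, hU (hιmono t z z' hzz') htU⟩
  -- Step 1 : μ U ≤ (μ.map M) E
  have step1 : μ U ≤ (μ.map M) E := by
    rw [Measure.map_apply Measurable.of_discrete MeasurableSet.of_discrete]
    set L : Set (A → Fin (N + 1)) :=
      {x | ∀ a a' : A, π a = π a' → x a ≠ 0 → x a' ≠ 0 → a = a'} with hL
    have hLc : μ Lᶜ = 0 := by
      have h := measure_compl (MeasurableSet.of_discrete : MeasurableSet L) (measure_ne_top μ _)
      rw [hlift, measure_univ] at h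
      simpa using h
    have hsub : U ∩ L ⊆ M ⁻¹' E := by
      rintro x ⟨hxU, hxL⟩
      set t : B → A := fun b =>
        if h : ∃ a, π a = b ∧ x a ≠ 0 then h.choose else s₀ b with ht_def
      have ht : ∀ b, π (t b) = b := by
        intro b
        simp only [ht_def]
        by_cases h : ∃ a, π a = b ∧ x a ≠ 0
        · rw [dif_pos h]; exact h.choose_spec.1
        · rw [dif_neg h]; exact hs₀ b
      have hxle : x ≤ ι t (M x) := by
        intro a
        by_cases hxa : x a = 0
        · rw [hxa]; exact Fin.zero_le _
        · have hex : ∃ a', π a' = π a ∧ x a' ≠ 0 := ⟨a, rfl, hxa⟩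
          have hta : t (π a) = a := by
            simp only [ht_def]
            rw [dif_pos hex]
            obtain ⟨hπc, hxc⟩ := hex.choose_spec
            exact hxL hex.choose a hπc hxc hxa
          have h1 : ι t (M x) a = M x (π a) := by
            rw [hι]; dsimp only; rw [if_pos hta]
          rw [h1, hM]
          exact Finset.le_sup (by simp : a ∈ Finset.univ.filter fun c => π c = π a)
      exact ⟨t, ht, hU hxle hxU⟩
    calc μ U ≤ μ ((U ∩ L) ∪ Lᶜ) := measure_mono (by
          intro x hx
          by_cases hxL : x ∈ L
          · exact Or.inl ⟨hx, hxL⟩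
          · exact Or.inr hxL)
      _ ≤ μ (U ∩ L) + μ Lᶜ := measure_union_le _ _
      _ = μ (U ∩ L) := by rw [hLc, add_zero]
      _ ≤ μ (M ⁻¹' E) := measure_mono hsub
  -- Step 2 : push down, compare with the s₀-marginal of ρ
  have step2 : (μ.map M) E ≤ (ρ.map fun x b => x (s₀ b)) E :=
    stochDom_mono (hpush s₀ hs₀) hEup
  -- Step 3 : the averaged/symmetry step
  set pre : Set (A → Fin (N + 1)) := (fun x b => x (s₀ b)) ⁻¹' E with hpre
  have step3 : (ρ.map fun x b => x (s₀ b)) E = ρ pre := by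
    rw [Measure.map_apply Measurable.of_discrete MeasurableSet.of_discrete]
  have step4 : ρ pre ≤ ρ U := by
    set act : ((b : B) → Equiv.Perm {a : A // π a = b}) → (A → Fin (N + 1)) → (A → Fin (N + 1)) :=
      fun σ x a => x (((σ (π a)).symm ⟨a, rfl⟩ : {c : A // π c = π a}) : A) with hact
    set H : Finset ((b : B) → Equiv.Perm {a : A // π a = b}) :=
      univ.filter (fun σ => ∀ b, σ b ∈ G b) with hH
    have hHne : H.Nonempty := by
      refine ⟨1, ?_⟩
      rw [hH, Finset.mem_filter]
      exact ⟨mem_univ _, fun b => one_mem (G b)⟩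
    have hρinv : ∀ σ ∈ H, ∀ S : Set (A → Fin (N + 1)), ρ ((act σ) ⁻¹' S) = ρ S := by
      intro σ hσ S
      have hσG : ∀ b, σ b ∈ G b := by
        rw [hH, Finset.mem_filter] at hσ
        exact hσ.2
      have h1 := hinv σ hσG
      calc ρ ((act σ) ⁻¹' S) = (ρ.map (act σ)) S :=
            (Measure.map_apply Measurable.of_discrete MeasurableSet.of_discrete).symm
        _ = ρ S := by
            simp only [hact]
            rw [h1]
    have act_eval : ∀ (σ : (b : B) → Equiv.Perm {a : A // π a = b}) (x : A → Fin (N + 1))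
        (b : B) (p : {a : A // π a = b}),
        act σ x ↑p = x ↑((σ b).symm ⟨↑p, p.2⟩) := by
      intro σ x b p
      obtain ⟨a, ha⟩ := p
      subst ha
      simp only [hact]
    -- the witness family
    set W : Finset ((B → Fin (N + 1)) × ((b : B) → {a : A // π a = b})) :=
      univ.filter (fun w => ι (fun b => ↑(w.2 b)) w.1 ∈ U) with hW
    -- pointwise count comparison
    have hcount : ∀ x : A → Fin (N + 1),
        (H.filter fun σ => act σ x ∈ pre).card ≤ (H.filter fun σ => act σ x ∈ U).card := by
      intro x
      set Γ : B → Type _ := fun b => {g : Equiv.Perm {a : A // π a = b} // g ∈ G b} with hΓ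
      set val : ∀ b, Γ b → {a : A // π a = b} → Fin (N + 1) :=
        fun b γ p => x ↑((γ : Equiv.Perm {a : A // π a = b}).symm p) with hval
      set p₀ : ∀ b, {a : A // π a = b} := fun b => ⟨s₀ b, hs₀ b⟩ with hp₀
      have hom : ∀ (b) (a : {a : A // π a = b}) (c : Fin (N + 1)),
          (univ.filter fun γ : Γ b => c ≤ val b γ a).card =
          (univ.filter fun γ : Γ b => c ≤ val b γ (p₀ b)).card := by
        intro b a c
        obtain ⟨τ, hτG, hτa⟩ := htrans b a (p₀ b)
        have key : ∀ γ : Equiv.Perm {a : A // π a = b}, (τ * γ).symm (p₀ b) = γ.symm a := by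
          intro γ
          have hτ : τ.symm (p₀ b) = a := by rw [Equiv.symm_apply_eq]; exact hτa.symm
          calc (τ * γ).symm (p₀ b) = ((τ * γ)⁻¹ : Equiv.Perm _) (p₀ b) := rfl
            _ = ((γ⁻¹ * τ⁻¹ : Equiv.Perm _)) (p₀ b) := by rw [mul_inv_rev]
            _ = γ.symm (τ.symm (p₀ b)) := rfl
            _ = γ.symm a := by rw [hτ]
        refine Finset.card_bij' (fun γ _ => (⟨τ * ↑γ, mul_mem hτG γ.2⟩ : Γ b))
          (fun γ _ => (⟨τ⁻¹ * ↑γ, mul_mem (inv_mem hτG) γ.2⟩ : Γ b)) ?_ ?_ ?_ ?_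
        · intro γ hγ
          simp only [Finset.mem_filter, Finset.mem_univ, true_and] at hγ ⊢
          rw [hval]
          dsimp only
          rw [key ↑γ]
          exact hγ
        · intro γ hγ
          simp only [Finset.mem_filter, Finset.mem_univ, true_and] at hγ ⊢
          rw [hval]
          dsimp only
          have := key (τ⁻¹ * ↑γ)
          rw [mul_inv_cancel_left] at this
          rw [← this]
          exact hγ
        · intro γ hγ
          apply Subtype.ext
          simp [inv_mul_cancel_left]
        · intro γ hγ
          apply Subtype.ext
          simp [mul_inv_cancel_left]
      -- translate the `pre` count
      have hside : ∀ (σ : (b : B) → Equiv.Perm {a : A // π a = b}) (hσ : ∀ b, σ b ∈ G b),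
          (act σ x ∈ pre ↔
            ∃ w ∈ W, ∀ b, w.1 b ≤ val b (⟨σ b, hσ b⟩ : Γ b) (p₀ b)) := by
        intro σ hσ
        have hz : ∀ b, act σ x (s₀ b) = val b (⟨σ b, hσ b⟩ : Γ b) (p₀ b) := by
          intro b
          have := act_eval σ x b (p₀ b)
          rw [hval]
          dsimp only
          convert this using 3
        have hfun : (fun b => act σ x (s₀ b)) = (fun b => val b (⟨σ b, hσ b⟩ : Γ b) (p₀ b)) :=
          funext hz
        constructor
        · intro hpre'
          have hzE : (fun b => val b (⟨σ b, hσ b⟩ : Γ b) (p₀ b)) ∈ E := by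
            have hmem : (fun b => act σ x (s₀ b)) ∈ E := hpre'
            rwa [hfun] at hmem
          obtain ⟨t, ht, htU⟩ := hzE
          refine ⟨(fun b => val b (⟨σ b, hσ b⟩ : Γ b) (p₀ b), fun b => ⟨t b, ht b⟩), ?_, ?_⟩
          · rw [hW, Finset.mem_filter]
            exact ⟨mem_univ _, htU⟩
          · intro b
            exact le_refl _
        · rintro ⟨w, hwW, hwle⟩
          rw [hW, Finset.mem_filter] at hwW
          have hzE : (fun b => val b (⟨σ b, hσ b⟩ : Γ b) (p₀ b)) ∈ E := by
            refine ⟨fun b => ↑(w.2 b), fun b => (w.2 b).2, ?_⟩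
            refine hU (hιmono (fun b => ↑(w.2 b)) w.1
              (fun b => val b (⟨σ b, hσ b⟩ : Γ b) (p₀ b)) ?_) hwW.2
            intro b
            exact hwle b
          show (fun b => act σ x (s₀ b)) ∈ E
          rw [hfun]
          exact hzE
      have ha : (H.filter fun σ => act σ x ∈ pre).card =
          (univ.filter fun γ : ∀ b, Γ b =>
            ∃ w ∈ W, ∀ b, w.1 b ≤ val b (γ b) (p₀ b)).card := by
        refine Finset.card_bij' (fun σ hσ => fun b => (⟨σ b, ?_⟩ : Γ b))
          (fun γ _ => fun b => ↑(γ b)) ?_ ?_ ?_ ?_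
        · have hσ' := (Finset.mem_filter.1 hσ).1
          have hσ'' : σ ∈ univ.filter (fun σ => ∀ b, σ b ∈ G b) := by
            rw [← hH]; exact hσ'
          exact (Finset.mem_filter.1 hσ'').2 b
        · intro σ hσ
          rw [Finset.mem_filter] at hσ
          obtain ⟨hσH, hσpre⟩ := hσ
          rw [hH, Finset.mem_filter] at hσH
          simp only [Finset.mem_filter, Finset.mem_univ, true_and]
          exact (hside σ hσH.2).1 hσpre
        · intro γ hγ
          simp only [Finset.mem_filter, Finset.mem_univ, true_and] at hγ
          rw [Finset.mem_filter]
          constructor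
          · rw [hH, Finset.mem_filter]
            exact ⟨mem_univ _, fun b => (γ b).2⟩
          · have : ∀ b, (⟨↑(γ b), (γ b).2⟩ : Γ b) = γ b := fun b => Subtype.ext rfl
            refine (hside (fun b => ↑(γ b)) (fun b => (γ b).2)).2 ?_
            obtain ⟨w, hw1, hw2⟩ := hγ
            refine ⟨w, hw1, fun b => ?_⟩
            rw [this b]
            exact hw2 b
        · intro σ hσ
          rfl
        · intro γ hγ
          funext b
          exact Subtype.ext rfl
      have hb : (univ.filter fun γ : ∀ b, Γ b =>
            ∃ w ∈ W, ∀ b, w.1 b ≤ val b (γ b) (w.2 b)).card ≤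
          (H.filter fun σ => act σ x ∈ U).card := by
        apply Finset.card_le_card_of_injOn (fun γ => fun b => (↑(γ b) : Equiv.Perm _))
        · intro γ hγ
          simp only [Finset.mem_coe, Finset.mem_filter, Finset.mem_univ, true_and] at hγ
          obtain ⟨w, hwW, hwle⟩ := hγ
          rw [hW, Finset.mem_filter] at hwW
          rw [Finset.mem_coe, Finset.mem_filter]
          constructor
          · rw [hH, Finset.mem_filter]
            exact ⟨mem_univ _, fun b => (γ b).2⟩
          · refine hU ?_ hwW.2
            intro a
            rw [hι]
            dsimp only
            by_cases hta : ↑(w.2 (π a)) = a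
            · rw [if_pos hta]
              have h1 := hwle (π a)
              rw [hval] at h1
              dsimp only at h1
              have h2 := act_eval (fun b => (↑(γ b) : Equiv.Perm _)) x (π a) (w.2 (π a))
              have h3 : (⟨↑(w.2 (π a)), (w.2 (π a)).2⟩ : {c : A // π c = π a}) = w.2 (π a) :=
                Subtype.ext rfl
              rw [h3] at h2
              calc w.1 (π a) ≤ x ↑((↑(γ (π a)) : Equiv.Perm _).symm (w.2 (π a))) := h1
                _ = act (fun b => (↑(γ b) : Equiv.Perm _)) x ↑(w.2 (π a)) := h2.symm
                _ = act (fun b => (↑(γ b) : Equiv.Perm _)) x a := by rw [hta]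
            · rw [if_neg hta]
              exact Fin.zero_le _
        · intro γ1 h1 γ2 h2 heq
          funext b
          exact Subtype.ext (congrFun heq b)
      calc (H.filter fun σ => act σ x ∈ pre).card
          = _ := ha
        _ ≤ _ := countS val p₀ hom W
        _ ≤ (H.filter fun σ => act σ x ∈ U).card := hb
    -- averaging
    have hexch : ∀ S : Set (A → Fin (N + 1)),
        ∑ σ ∈ H, ρ ((act σ) ⁻¹' S)
          = ∑ x : A → Fin (N + 1), ((H.filter fun σ => act σ x ∈ S).card : ℝ≥0∞) * ρ {x} := by
      intro S
      calc ∑ σ ∈ H, ρ ((act σ) ⁻¹' S)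
          = ∑ σ ∈ H, ∑ x ∈ univ.filter (· ∈ (act σ) ⁻¹' S), ρ {x} :=
            Finset.sum_congr rfl fun σ _ => meas_eq_sum ρ _
        _ = ∑ σ ∈ H, ∑ x : A → Fin (N + 1), if act σ x ∈ S then ρ {x} else 0 := by
            refine Finset.sum_congr rfl fun σ _ => ?_
            rw [Finset.sum_filter]
            simp only [Set.mem_preimage]
        _ = ∑ x : A → Fin (N + 1), ∑ σ ∈ H, if act σ x ∈ S then ρ {x} else 0 :=
            Finset.sum_comm
        _ = ∑ x : A → Fin (N + 1), ((H.filter fun σ => act σ x ∈ S).card : ℝ≥0∞) * ρ {x} := by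
            refine Finset.sum_congr rfl fun x _ => ?_
            rw [← Finset.sum_filter, Finset.sum_const, nsmul_eq_mul]
    have h1 : (H.card : ℝ≥0∞) * ρ pre = ∑ σ ∈ H, ρ ((act σ) ⁻¹' pre) := by
      rw [Finset.sum_congr rfl (fun σ hσ => hρinv σ hσ pre), Finset.sum_const, nsmul_eq_mul]
    have h2 : (H.card : ℝ≥0∞) * ρ U = ∑ σ ∈ H, ρ ((act σ) ⁻¹' U) := by
      rw [Finset.sum_congr rfl (fun σ hσ => hρinv σ hσ U), Finset.sum_const, nsmul_eq_mul]
    have hkey : (H.card : ℝ≥0∞) * ρ pre ≤ (H.card : ℝ≥0∞) * ρ U := by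
      rw [h1, h2, hexch pre, hexch U]
      refine Finset.sum_le_sum fun x _ => ?_
      exact mul_le_mul_left (by exact_mod_cast hcount x) _
    have hcne : (H.card : ℝ≥0∞) ≠ 0 := by
      simp only [ne_eq, Nat.cast_eq_zero]
      exact Finset.card_ne_zero_of_mem hHne.choose_spec
    have hctop : (H.card : ℝ≥0∞) ≠ ⊤ := ENNReal.natCast_ne_top _
    exact (ENNReal.mul_le_mul_iff_right hcne hctop).1 hkey
  calc μ U ≤ (μ.map M) E := step1
    _ ≤ (ρ.map fun x b => x (s₀ b)) E := step2
    _ = ρ pre := step3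
    _ ≤ ρ U := step4
end

section
/- Let C be a finite set, let p_i ∈ [0,1] for each i ∈ C, and let P = ⊗_{i∈C} Bernoulli(p_i) on {0,1}^C. Let E₁ and E₂ be increasing subsets of {0,1}^C. Then P(E₁ ∘ E₂) ≤ P(E₁) · P(E₂), where E₁ ∘ E₂ denotes the disjoint occurrence of E₁ and E₂ (the BK inequality for increasing events). -/
open MeasureTheory ProbabilityTheory

/-- Bernoulli measure of parameter `p` on `Bool`. -/
noncomputable def bern (p : ENNReal) : Measure Bool :=
  p • Measure.dirac true + (1 - p) • Measure.dirac false

/-- Disjoint occurrence of two events in `{0,1}^C`. -/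
def DisjOcc {C : Type*} (E₁ E₂ : Set (C → Bool)) : Set (C → Bool) :=
  {ω | ∃ P₁ P₂ : Set C, Disjoint P₁ P₂ ∧
    (∀ ω', (∀ i ∈ P₁, ω' i = ω i) → ω' ∈ E₁) ∧
    (∀ ω', (∀ i ∈ P₂, ω' i = ω i) → ω' ∈ E₂)}

/-- An increasing (upward closed) event. -/
def IncreasingEvent {C : Type*} (E : Set (C → Bool)) : Prop :=
  ∀ ω ∈ E, ∀ ω' : C → Bool, ω ≤ ω' → ω' ∈ E

set_option linter.unusedSectionVars false

section Aux
variable {C : Type*} [Fintype C] [DecidableEq C]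


noncomputable def msum (w : C → Bool → ENNReal) (E : Set (C → Bool)) : ENNReal :=
  ∑ ω : C → Bool, E.indicator (fun ω => ∏ i, w i (ω i)) ω

lemma msum_mono (w : C → Bool → ENNReal) {E F : Set (C → Bool)}
    (h : E ⊆ F) : msum w E ≤ msum w F :=
  Finset.sum_le_sum fun ω _ => Set.indicator_le_indicator_of_subset h (fun _ => zero_le) ω

lemma msum_union_add_inter (w : C → Bool → ENNReal) (E F : Set (C → Bool)) :
    msum w (E ∪ F) + msum w (E ∩ F) = msum w E + msum w F := by
  unfold msum
  rw [← Finset.sum_add_distrib, ← Finset.sum_add_distrib]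
  exact Finset.sum_congr rfl fun ω _ => Set.indicator_union_add_inter_apply _ E F ω

def ext1 (i₀ : C) (τ : {j : C // j ≠ i₀} → Bool) (b : Bool) : C → Bool :=
  fun j => if h : j = i₀ then b else τ ⟨j, h⟩

def splitEquiv (i₀ : C) : (C → Bool) ≃ Bool × ({j : C // j ≠ i₀} → Bool) where
  toFun ω := (ω i₀, fun j => ω j)
  invFun q := ext1 i₀ q.2 q.1
  left_inv ω := by
    funext j; unfold ext1; by_cases h : j = i₀ <;> simp [h]
  right_inv q := by
    ext j
    · simp [ext1]
    · simp [ext1, j.2]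

lemma ext1_apply_ne (i₀ : C) (τ : {j : C // j ≠ i₀} → Bool) (b : Bool) (j : {j : C // j ≠ i₀}) :
    ext1 i₀ τ b j = τ j := by simp [ext1, j.2]

lemma ext1_apply_self (i₀ : C) (τ : {j : C // j ≠ i₀} → Bool) (b : Bool) :
    ext1 i₀ τ b i₀ = b := by simp [ext1]

lemma prod_ext1 (i₀ : C) (w : C → Bool → ENNReal) (τ : {j : C // j ≠ i₀} → Bool) (b : Bool) :
    ∏ i, w i (ext1 i₀ τ b i) = w i₀ b * ∏ j : {j : C // j ≠ i₀}, w j (τ j) := by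
  rw [Finset.prod_eq_mul_prod_sdiff_singleton_of_mem (Finset.mem_univ i₀)]
  congr 1
  · simp [ext1]
  · rw [Finset.prod_subtype (Finset.univ \ {i₀}) (p := fun j => j ≠ i₀) (by simp)]
    exact Finset.prod_congr rfl fun j _ => by rw [ext1_apply_ne]

/-- Section of an event at coordinate `i₀` with value `b`. -/
def sec (i₀ : C) (b : Bool) (E : Set (C → Bool)) : Set ({j : C // j ≠ i₀} → Bool) :=
  {τ | ext1 i₀ τ b ∈ E}


lemma sum_sec (i₀ : C) (w : C → Bool → ENNReal) (E : Set (C → Bool)) (b : Bool) :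
    ∑ τ : {j : C // j ≠ i₀} → Bool,
        E.indicator (fun ω => ∏ i, w i (ω i)) (ext1 i₀ τ b)
      = w i₀ b * msum (fun j => w j.1) (sec i₀ b E) := by
  unfold msum
  rw [Finset.mul_sum]
  refine Finset.sum_congr rfl fun τ _ => ?_
  by_cases h : ext1 i₀ τ b ∈ E
  · rw [Set.indicator_of_mem h, Set.indicator_of_mem (by exact h), prod_ext1]
  · rw [Set.indicator_of_notMem h, Set.indicator_of_notMem (by exact h), mul_zero]

lemma msum_split (i₀ : C) (w : C → Bool → ENNReal) (E : Set (C → Bool)) :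
    msum w E = w i₀ false * msum (fun j => w j.1) (sec i₀ false E)
      + w i₀ true * msum (fun j => w j.1) (sec i₀ true E) := by
  unfold msum
  rw [← (splitEquiv i₀).symm.sum_comp (fun ω => E.indicator (fun ω => ∏ i, w i (ω i)) ω)]
  rw [Fintype.sum_prod_type, Fintype.sum_bool, add_comm]
  show (∑ τ, E.indicator _ (ext1 i₀ τ false)) + (∑ τ, E.indicator _ (ext1 i₀ τ true)) = _
  rw [sum_sec, sum_sec]; rfl


lemma DisjOcc_mono {E₁ E₂ F₁ F₂ : Set (C → Bool)} (h₁ : E₁ ⊆ F₁) (h₂ : E₂ ⊆ F₂) :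
    DisjOcc E₁ E₂ ⊆ DisjOcc F₁ F₂ := by
  rintro ω ⟨P₁, P₂, hd, hA, hB⟩
  exact ⟨P₁, P₂, hd, fun ω' h => h₁ (hA ω' h), fun ω' h => h₂ (hB ω' h)⟩

lemma DisjOcc_subset_inter {E₁ E₂ : Set (C → Bool)} : DisjOcc E₁ E₂ ⊆ E₁ ∩ E₂ := by
  rintro ω ⟨P₁, P₂, _, hA, hB⟩
  exact ⟨hA ω (fun _ _ => rfl), hB ω (fun _ _ => rfl)⟩

lemma sec_increasing (i₀ : C) (b : Bool) {E : Set (C → Bool)} (hE : IncreasingEvent E) :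
    IncreasingEvent (sec i₀ b E) := by
  intro τ hτ τ' hle
  refine hE _ hτ _ fun j => ?_
  unfold ext1
  by_cases h : j = i₀ <;> simp [h]
  · exact hle ⟨j, h⟩

lemma sec_false_subset (i₀ : C) {E : Set (C → Bool)} (hE : IncreasingEvent E) :
    sec i₀ false E ⊆ sec i₀ true E := by
  intro τ hτ
  refine hE _ hτ _ fun j => ?_
  unfold ext1
  by_cases h : j = i₀ <;> simp [h]

lemma sec_disjOcc (i₀ : C) (b : Bool) (A B : Set (C → Bool)) :
    sec i₀ b (DisjOcc A B) ⊆
      DisjOcc (sec i₀ b A) (sec i₀ false B) ∪ DisjOcc (sec i₀ false A) (sec i₀ b B) := by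
  rintro τ ⟨P₁, P₂, hd, hA, hB⟩
  set Q₁ : Set {j : C // j ≠ i₀} := {j | (j : C) ∈ P₁} with hQ₁
  set Q₂ : Set {j : C // j ≠ i₀} := {j | (j : C) ∈ P₂} with hQ₂
  have hdQ : Disjoint Q₁ Q₂ := by
    rw [Set.disjoint_left] at hd ⊢
    exact fun j h1 h2 => hd h1 h2
  by_cases hi : i₀ ∈ P₁
  · left
    refine ⟨Q₁, Q₂, hdQ, fun τ' h => ?_, fun τ' h => ?_⟩
    · refine hA (ext1 i₀ τ' b) fun j hj => ?_
      by_cases hj0 : j = i₀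
      · subst hj0; simp [ext1]
      · have := h ⟨j, hj0⟩ hj
        simp only [ext1, dif_neg hj0]
        exact this
    · have hi2 : i₀ ∉ P₂ := fun h2 => Set.disjoint_left.mp hd hi h2
      refine hB (ext1 i₀ τ' false) fun j hj => ?_
      have hj0 : j ≠ i₀ := fun e => hi2 (e ▸ hj)
      have := h ⟨j, hj0⟩ hj
      simp only [ext1, dif_neg hj0]
      exact this
  · right
    refine ⟨Q₁, Q₂, hdQ, fun τ' h => ?_, fun τ' h => ?_⟩
    · refine hA (ext1 i₀ τ' false) fun j hj => ?_
      have hj0 : j ≠ i₀ := fun e => hi (e ▸ hj)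
      have := h ⟨j, hj0⟩ hj
      simp only [ext1, dif_neg hj0]
      exact this
    · refine hB (ext1 i₀ τ' b) fun j hj => ?_
      by_cases hj0 : j = i₀
      · subst hj0; simp [ext1]
      · have := h ⟨j, hj0⟩ hj
        simp only [ext1, dif_neg hj0]
        exact this

end Aux

universe u

theorem bk_key (n : ℕ) : ∀ (C : Type u) [Fintype C] [DecidableEq C],
    Fintype.card C = n → ∀ (w : C → Bool → ENNReal), (∀ i, w i false + w i true = 1) →
    ∀ (E₁ E₂ : Set (C → Bool)), IncreasingEvent E₁ → IncreasingEvent E₂ →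
    msum w (DisjOcc E₁ E₂) ≤ msum w E₁ * msum w E₂ := by
  induction n with
  | zero =>
    intro C _ _ hcard w hw E₁ E₂ h₁ h₂
    haveI : IsEmpty C := Fintype.card_eq_zero_iff.mp hcard
    have hcard1 : Fintype.card (C → Bool) = 1 := by
      rw [Fintype.card_pi]
      exact Finset.prod_of_isEmpty _
    obtain ⟨ω0, hω0⟩ := Fintype.card_eq_one_iff.mp hcard1
    have hsum : ∀ E : Set (C → Bool),
        msum w E = E.indicator (fun ω => ∏ i, w i (ω i)) ω0 := fun E =>
      Fintype.sum_eq_single ω0 (fun y hy => absurd (hω0 y) hy)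
    rw [hsum, hsum, hsum]
    by_cases hD : ω0 ∈ DisjOcc E₁ E₂
    · obtain ⟨hd1, hd2⟩ := DisjOcc_subset_inter hD
      rw [Set.indicator_of_mem hD, Set.indicator_of_mem hd1, Set.indicator_of_mem hd2]
      rw [Finset.prod_of_isEmpty]
      rw [mul_one]
    · rw [Set.indicator_of_notMem hD]
      exact zero_le
  | succ n ih =>
    intro C _ _ hcard w hw E₁ E₂ h₁ h₂
    have hpos : 0 < Fintype.card C := by omega
    obtain ⟨i₀⟩ := Fintype.card_pos_iff.mp hpos
    have hcard' : Fintype.card {j : C // j ≠ i₀} = n := by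
      have h1 : Fintype.card {j : C // ¬ j = i₀} =
          Fintype.card C - Fintype.card {j : C // j = i₀} :=
        Fintype.card_subtype_compl _
      have h2 : Fintype.card {j : C // j = i₀} = 1 := Fintype.card_subtype_eq i₀
      have : Fintype.card {j : C // ¬ j = i₀} = n := by omega
      exact this
    set w' : {j : C // j ≠ i₀} → Bool → ENNReal := fun j => w j.1 with hw'def
    have hw'sum : ∀ j : {j : C // j ≠ i₀}, w' j false + w' j true = 1 := fun j => hw j.1
    set q₀ := w i₀ false
    set q₁ := w i₀ true
    set a₀ := msum w' (sec i₀ false E₁)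
    set a₁ := msum w' (sec i₀ true E₁)
    set b₀ := msum w' (sec i₀ false E₂)
    set b₁ := msum w' (sec i₀ true E₂)
    have hx : msum w' (DisjOcc (sec i₀ false E₁) (sec i₀ false E₂)) ≤ a₀ * b₀ :=
      ih _ hcard' w' hw'sum _ _ (sec_increasing i₀ false h₁) (sec_increasing i₀ false h₂)
    have hy : msum w' (DisjOcc (sec i₀ true E₁) (sec i₀ false E₂)) ≤ a₁ * b₀ :=
      ih _ hcard' w' hw'sum _ _ (sec_increasing i₀ true h₁) (sec_increasing i₀ false h₂)
    have hz : msum w' (DisjOcc (sec i₀ false E₁) (sec i₀ true E₂)) ≤ a₀ * b₁ :=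
      ih _ hcard' w' hw'sum _ _ (sec_increasing i₀ false h₁) (sec_increasing i₀ true h₂)
    have hv : msum w' (DisjOcc (sec i₀ true E₁) (sec i₀ true E₂)) ≤ a₁ * b₁ :=
      ih _ hcard' w' hw'sum _ _ (sec_increasing i₀ true h₁) (sec_increasing i₀ true h₂)
    set S := DisjOcc (sec i₀ true E₁) (sec i₀ false E₂)
    set T := DisjOcc (sec i₀ false E₁) (sec i₀ true E₂)
    set R := DisjOcc (sec i₀ false E₁) (sec i₀ false E₂)
    set V := DisjOcc (sec i₀ true E₁) (sec i₀ true E₂)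
    -- bound on x := msum of false-section of the disjoint occurrence
    have hsecF : sec i₀ false (DisjOcc E₁ E₂) ⊆ R := by
      intro τ hτ
      rcases sec_disjOcc i₀ false E₁ E₂ hτ with h | h
      · exact h
      · exact h
    have hsecT : sec i₀ true (DisjOcc E₁ E₂) ⊆ S ∪ T := sec_disjOcc i₀ true E₁ E₂
    have hRsub : R ⊆ S ∩ T := Set.subset_inter
      (DisjOcc_mono (sec_false_subset i₀ h₁) subset_rfl)
      (DisjOcc_mono subset_rfl (sec_false_subset i₀ h₂))
    have hUV : S ∪ T ⊆ V := Set.union_subset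
      (DisjOcc_mono subset_rfl (sec_false_subset i₀ h₂))
      (DisjOcc_mono (sec_false_subset i₀ h₁) subset_rfl)
    set x := msum w' (sec i₀ false (DisjOcc E₁ E₂))
    set u := msum w' (sec i₀ true (DisjOcc E₁ E₂))
    have key1 : x ≤ a₀ * b₀ := (msum_mono w' hsecF).trans hx
    have key2 : u ≤ a₁ * b₁ :=
      ((msum_mono w' hsecT).trans (msum_mono w' hUV)).trans hv
    have key3 : x + u ≤ a₁ * b₀ + a₀ * b₁ := by
      have h4 : x + u ≤ msum w' (S ∩ T) + msum w' (S ∪ T) :=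
        add_le_add ((msum_mono w' hsecF).trans (msum_mono w' hRsub)) (msum_mono w' hsecT)
      have h5 : msum w' (S ∩ T) + msum w' (S ∪ T) = msum w' S + msum w' T := by
        rw [add_comm, msum_union_add_inter]
      exact h4.trans (h5.le.trans (add_le_add hy hz))
    rw [msum_split i₀ w (DisjOcc E₁ E₂), msum_split i₀ w E₁, msum_split i₀ w E₂]
    calc q₀ * x + q₁ * u
        = (q₀ + q₁) * (q₀ * x + q₁ * u) := by rw [hw i₀, one_mul]
      _ = q₀ * q₀ * x + q₁ * q₁ * u + q₀ * q₁ * (x + u) := by ring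
      _ ≤ q₀ * q₀ * (a₀ * b₀) + q₁ * q₁ * (a₁ * b₁) + q₀ * q₁ * (a₁ * b₀ + a₀ * b₁) := by
          gcongr
      _ = (q₀ * a₀ + q₁ * a₁) * (q₀ * b₀ + q₁ * b₁) := by ring

/-- **The BK inequality for increasing events.** -/
theorem stmt8 {C : Type*} [Fintype C]
    (p : C → ENNReal) (hp : ∀ i, p i ≤ 1)
    (E₁ E₂ : Set (C → Bool))
    (h₁ : IncreasingEvent E₁) (h₂ : IncreasingEvent E₂) :
    Measure.pi (fun i => bern (p i)) (DisjOcc E₁ E₂) ≤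
      Measure.pi (fun i => bern (p i)) E₁ * Measure.pi (fun i => bern (p i)) E₂ := by
  classical
  haveI : ∀ i, IsFiniteMeasure (bern (p i)) := by
    intro i
    constructor
    rw [bern]
    simp only [Measure.add_apply, Measure.smul_apply, smul_eq_mul, measure_univ, mul_one]
    exact lt_of_le_of_lt (add_le_add (hp i) tsub_le_self)
      (by norm_num : (1 : ENNReal) + 1 < ⊤)
  set w : C → Bool → ENNReal := fun i b => bif b then p i else 1 - p i with hwdef
  have hbern : ∀ (i : C) (b : Bool), bern (p i) {b} = w i b := by
    intro i b
    cases b <;>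
      simp [bern, w, Measure.dirac_apply, Set.indicator_apply]
  have hsingle : ∀ ω : C → Bool,
      Measure.pi (fun i => bern (p i)) {ω} = ∏ i, w i (ω i) := by
    intro ω
    have h : {ω} = Set.pi Set.univ (fun i => {ω i}) := by
      ext ω'
      simp [Set.mem_pi, funext_iff]
    rw [h, Measure.pi_pi]
    exact Finset.prod_congr rfl fun i _ => hbern i (ω i)
  have hμ : ∀ S : Set (C → Bool), Measure.pi (fun i => bern (p i)) S = msum w S := by
    intro S
    have h1 : S = ⋃ ω ∈ S.toFinset, {ω} := by simp
    conv_lhs => rw [h1]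
    rw [measure_biUnion_finset
      (fun a _ b _ hab => by simpa [Set.disjoint_singleton] using hab)
      (fun _ _ => MeasurableSet.of_discrete)]
    have h2 : msum w S = ∑ ω ∈ S.toFinset, ∏ i, w i (ω i) := by
      rw [msum]
      conv_lhs => rw [← Set.coe_toFinset S]
      exact Finset.sum_indicator_subset _ (Finset.subset_univ S.toFinset)
    rw [h2]
    exact Finset.sum_congr rfl fun ω _ => hsingle ω
  have hwsum : ∀ i, w i false + w i true = 1 := by
    intro i
    simp only [w, Bool.cond_false, Bool.cond_true]
    exact tsub_add_cancel_of_le (hp i)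
  rw [hμ, hμ, hμ]
  exact bk_key (Fintype.card C) C rfl w hwsum E₁ E₂ h₁ h₂
end

section
/- Let C be a finite set, p_i ∈ [0,1] for i ∈ C, and P = ⊗_{i∈C} Bernoulli(p_i) on {0,1}^C. Let E₁, E₂ be increasing subsets of {0,1}^C. Let Q be a probability measure on {0,1}^{C×{1,2}} of the form ⊗_{i∈C} ρ_i, where each ρ_i is a probability measure on {0,1}² whose two marginals are Bernoulli measures of parameter at least p_i. Then P(E₁ ∘ E₂) ≤ Q(E₁ × E₂), where E₁ × E₂ is viewed as a subset of {0,1}^{C×{1,2}} ≅ {0,1}^C × {0,1}^C. -/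
open MeasureTheory ProbabilityTheory

namespace BKaux

variable {α : Type*}

def extO {β : Type*} (g : α → β) (b : β) : Option α → β := fun o => o.elim b g

def sec (E : Set (Option α → Bool)) (b : Bool) : Set (α → Bool) := {ω | extO ω b ∈ E}

section sums
variable [Fintype α]

open Classical in
noncomputable def lhsSum (w : α → Bool → ℝ) (D : Set (α → Bool)) : ℝ :=
  ∑ ω : α → Bool, if ω ∈ D then ∏ i, w i (ω i) else 0

open Classical in
noncomputable def rhsSum (r : α → Bool → Bool → ℝ) (E₁ E₂ : Set (α → Bool)) : ℝ :=
  ∑ f : α → Bool × Bool,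
    if ((fun i => (f i).1) ∈ E₁ ∧ (fun i => (f i).2) ∈ E₂) then
      ∏ i, r i (f i).1 (f i).2 else 0

lemma lhsSum_nonneg {w : α → Bool → ℝ} (hw : ∀ i b, 0 ≤ w i b) (D : Set (α → Bool)) :
    0 ≤ lhsSum w D := by
  refine Finset.sum_nonneg fun ω _ => ?_
  split
  · exact Finset.prod_nonneg fun i _ => hw i _
  · exact le_rfl

lemma lhsSum_mono {w : α → Bool → ℝ} (hw : ∀ i b, 0 ≤ w i b) {D D' : Set (α → Bool)}
    (h : D ⊆ D') : lhsSum w D ≤ lhsSum w D' := by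
  refine Finset.sum_le_sum fun ω _ => ?_
  by_cases hm : ω ∈ D
  · rw [if_pos hm, if_pos (h hm)]
  · rw [if_neg hm]
    split
    · exact Finset.prod_nonneg fun i _ => hw i _
    · exact le_rfl

lemma lhsSum_union_inter (w : α → Bool → ℝ) (U V : Set (α → Bool)) :
    lhsSum w (U ∪ V) + lhsSum w (U ∩ V) = lhsSum w U + lhsSum w V := by
  classical
  unfold lhsSum
  rw [← Finset.sum_add_distrib, ← Finset.sum_add_distrib]
  refine Finset.sum_congr rfl fun ω _ => ?_
  by_cases h1 : ω ∈ U <;> by_cases h2 : ω ∈ V <;>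
    simp [Set.mem_union, Set.mem_inter_iff, h1, h2]

lemma rhsSum_nonneg {r : α → Bool → Bool → ℝ} (hr : ∀ i a b, 0 ≤ r i a b)
    (E₁ E₂ : Set (α → Bool)) : 0 ≤ rhsSum r E₁ E₂ := by
  refine Finset.sum_nonneg fun f _ => ?_
  split
  · exact Finset.prod_nonneg fun i _ => hr i _ _
  · exact le_rfl

lemma rhsSum_mono {r : α → Bool → Bool → ℝ} (hr : ∀ i a b, 0 ≤ r i a b)
    {E₁ E₂ E₁' E₂' : Set (α → Bool)} (h1 : E₁ ⊆ E₁') (h2 : E₂ ⊆ E₂') :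
    rhsSum r E₁ E₂ ≤ rhsSum r E₁' E₂' := by
  refine Finset.sum_le_sum fun f _ => ?_
  by_cases hm : ((fun i => (f i).1) ∈ E₁ ∧ (fun i => (f i).2) ∈ E₂)
  · rw [if_pos hm, if_pos ⟨h1 hm.1, h2 hm.2⟩]
  · rw [if_neg hm]
    split
    · exact Finset.prod_nonneg fun i _ => hr i _ _
    · exact le_rfl

lemma sum_univ_inst {X : Type*} (I J : Fintype X) (f : X → ℝ) :
    @Finset.sum X ℝ _ (@Finset.univ X I) f = @Finset.sum X ℝ _ (@Finset.univ X J) f := by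
  rw [Subsingleton.elim I J]

lemma extO_pair (x : Option α → Bool) :
    extO (fun a => x (some a)) (x none) = x := by
  funext o; cases o <;> rfl

lemma extO_pair' {β : Type*} (x : Option α → β) :
    extO (fun a => x (some a)) (x none) = x := by
  funext o; cases o <;> rfl

lemma lhsSum_option (w : Option α → Bool → ℝ) (D : Set (Option α → Bool)) :
    lhsSum w D = w none true * lhsSum (fun a => w (some a)) (sec D true)
      + w none false * lhsSum (fun a => w (some a)) (sec D false) := by
  classical
  unfold lhsSum
  refine Eq.trans (sum_univ_inst _ _ _) (Eq.trans (Fintype.sum_equiv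
    (Equiv.piOptionEquivProd (β := fun _ : Option α => Bool)) _
    (fun x : Bool × (α → Bool) =>
      if extO x.2 x.1 ∈ D then ∏ i : Option α, w i (extO x.2 x.1 i) else 0)
    (fun x => by rw [Equiv.piOptionEquivProd]; simp only [Equiv.coe_fn_mk]
                 rw [extO_pair' x])) ?_)
  rw [Fintype.sum_prod_type, Fintype.sum_bool, Finset.mul_sum, Finset.mul_sum]
  congr 1 <;> refine Finset.sum_congr rfl fun ω _ => ?_
  · by_cases h : extO ω true ∈ D
    · rw [if_pos h, if_pos (show ω ∈ sec D true from h), Fintype.prod_option]; rfl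
    · rw [if_neg h, if_neg (show ω ∉ sec D true from h), mul_zero]
  · by_cases h : extO ω false ∈ D
    · rw [if_pos h, if_pos (show ω ∈ sec D false from h), Fintype.prod_option]; rfl
    · rw [if_neg h, if_neg (show ω ∉ sec D false from h), mul_zero]

lemma extO_fst (f' : α → Bool × Bool) (a b : Bool) :
    (fun i => (extO f' (a, b) i).1) = extO (fun i => (f' i).1) a := by
  funext o; cases o <;> rfl

lemma extO_snd (f' : α → Bool × Bool) (a b : Bool) :
    (fun i => (extO f' (a, b) i).2) = extO (fun i => (f' i).2) b := by
  funext o; cases o <;> rfl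

open Classical in
lemma rhsSum_option_term (r : Option α → Bool → Bool → ℝ) (E₁ E₂ : Set (Option α → Bool))
    (a b : Bool) (f' : α → Bool × Bool) :
    (if ((fun i => (extO f' (a, b) i).1) ∈ E₁ ∧ (fun i => (extO f' (a, b) i).2) ∈ E₂) then
        ∏ i : Option α, r i (extO f' (a, b) i).1 (extO f' (a, b) i).2 else 0)
      = r none a b *
        (if ((fun i => (f' i).1) ∈ sec E₁ a ∧ (fun i => (f' i).2) ∈ sec E₂ b) then
          ∏ i : α, r (some i) (f' i).1 (f' i).2 else 0) := by
  have hmem : ((fun i => (extO f' (a, b) i).1) ∈ E₁ ∧ (fun i => (extO f' (a, b) i).2) ∈ E₂)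
      ↔ ((fun i => (f' i).1) ∈ sec E₁ a ∧ (fun i => (f' i).2) ∈ sec E₂ b) := by
    rw [extO_fst, extO_snd]; exact Iff.rfl
  by_cases h : ((fun i => (extO f' (a, b) i).1) ∈ E₁ ∧ (fun i => (extO f' (a, b) i).2) ∈ E₂)
  · rw [if_pos h, if_pos (hmem.1 h), Fintype.prod_option]; rfl
  · rw [if_neg h, if_neg (fun hc => h (hmem.2 hc)), mul_zero]

lemma rhsSum_option (r : Option α → Bool → Bool → ℝ) (E₁ E₂ : Set (Option α → Bool)) :
    rhsSum r E₁ E₂ =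
      r none true true * rhsSum (fun a => r (some a)) (sec E₁ true) (sec E₂ true)
    + r none true false * rhsSum (fun a => r (some a)) (sec E₁ true) (sec E₂ false)
    + r none false true * rhsSum (fun a => r (some a)) (sec E₁ false) (sec E₂ true)
    + r none false false * rhsSum (fun a => r (some a)) (sec E₁ false) (sec E₂ false) := by
  classical
  unfold rhsSum
  refine Eq.trans (sum_univ_inst _ _ _) (Eq.trans (Fintype.sum_equiv
    (Equiv.piOptionEquivProd (β := fun _ : Option α => Bool × Bool)) _
    (fun x : (Bool × Bool) × (α → Bool × Bool) =>
      if ((fun i => (extO x.2 x.1 i).1) ∈ E₁ ∧ (fun i => (extO x.2 x.1 i).2) ∈ E₂) then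
        ∏ i : Option α, r i (extO x.2 x.1 i).1 (extO x.2 x.1 i).2 else 0)
    (fun x => by rw [Equiv.piOptionEquivProd]; simp only [Equiv.coe_fn_mk]
                 rw [extO_pair' x])) ?_)
  rw [Fintype.sum_prod_type, Fintype.sum_prod_type, Fintype.sum_bool]
  rw [Fintype.sum_bool, Fintype.sum_bool]
  simp only [Finset.mul_sum]
  rw [show ∀ A B C D' : ℝ, (A + B) + (C + D') = A + B + C + D' from fun _ _ _ _ => by ring]
  congr 1
  · congr 1
    · congr 1
      · exact Finset.sum_congr rfl fun f' _ => rhsSum_option_term r E₁ E₂ true true f'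
      · exact Finset.sum_congr rfl fun f' _ => rhsSum_option_term r E₁ E₂ true false f'
    · exact Finset.sum_congr rfl fun f' _ => rhsSum_option_term r E₁ E₂ false true f'
  · exact Finset.sum_congr rfl fun f' _ => rhsSum_option_term r E₁ E₂ false false f'

end sums


/-- scalar core inequality -/
lemma scalar (wt wf r00 r01 r10 r11 x u Y00 Y01 Y10 Y11 : ℝ)
    (hwt : 0 ≤ wt) (hw : wt + wf = 1)
    (h00 : 0 ≤ r00) (h01 : 0 ≤ r01) (h10 : 0 ≤ r10) (h11 : 0 ≤ r11)
    (hr : r00 + r01 + r10 + r11 = 1)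
    (hd1 : wt ≤ r11 + r10) (hd2 : wt ≤ r11 + r01)
    (hx : 0 ≤ x) (hxY : x ≤ Y00) (hY1 : Y00 ≤ Y01) (hY2 : Y00 ≤ Y10)
    (hY3 : Y01 ≤ Y11) (hY4 : Y10 ≤ Y11)
    (hu : u ≤ Y11) (hxu : x + u ≤ Y01 + Y10) :
    wf * x + wt * u ≤ r00 * Y00 + r01 * Y01 + r10 * Y10 + r11 * Y11 := by
  rcases le_total wt r11 with h | h
  · nlinarith [mul_nonneg hwt (sub_nonneg.2 hu), mul_nonneg h00 (sub_nonneg.2 hxY),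
      mul_nonneg h01 (sub_nonneg.2 (hxY.trans hY1)), mul_nonneg h10 (sub_nonneg.2 (hxY.trans hY2)),
      mul_nonneg (sub_nonneg.2 h) (sub_nonneg.2 (hxY.trans (hY1.trans hY3)))]
  · nlinarith [mul_nonneg (sub_nonneg.2 h) (sub_nonneg.2 hxu), mul_nonneg h11 (sub_nonneg.2 hu),
      mul_nonneg h00 (sub_nonneg.2 hxY),
      mul_nonneg (by linarith : (0:ℝ) ≤ r01 + r11 - wt) (sub_nonneg.2 (hxY.trans hY1)),
      mul_nonneg (by linarith : (0:ℝ) ≤ r10 + r11 - wt) (sub_nonneg.2 (hxY.trans hY2))]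


lemma extO_mono {ω ω' : α → Bool} (h : ω ≤ ω') {b b' : Bool} (hb : b ≤ b') :
    extO ω b ≤ extO ω' b' := by
  intro o; cases o with
  | none => exact hb
  | some a => exact h a

lemma sec_increasing {E : Set (Option α → Bool)} (hE : IncreasingEvent E) (b : Bool) :
    IncreasingEvent (sec E b) := by
  intro ω hω ω' hle
  exact hE _ hω _ (extO_mono hle le_rfl)

lemma sec_mono {E : Set (Option α → Bool)} (hE : IncreasingEvent E) :
    sec E false ⊆ sec E true := by
  intro ω hω
  exact hE _ hω _ (extO_mono le_rfl (by simp))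

lemma disjOcc_mono {E₁ E₂ E₁' E₂' : Set (α → Bool)} (h1 : E₁ ⊆ E₁') (h2 : E₂ ⊆ E₂') :
    DisjOcc E₁ E₂ ⊆ DisjOcc E₁' E₂' := by
  rintro ω ⟨P₁, P₂, hd, hf1, hf2⟩
  exact ⟨P₁, P₂, hd, fun ω' h => h1 (hf1 ω' h), fun ω' h => h2 (hf2 ω' h)⟩

lemma sec_disjOcc_false {E₁ E₂ : Set (Option α → Bool)} :
    sec (DisjOcc E₁ E₂) false ⊆ DisjOcc (sec E₁ false) (sec E₂ false) := by
  rintro ω ⟨P₁, P₂, hd, hf1, hf2⟩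
  refine ⟨some ⁻¹' P₁, some ⁻¹' P₂, hd.preimage _, ?_, ?_⟩
  · intro τ hτ
    refine hf1 (extO τ false) ?_
    intro o ho
    cases o with
    | none => rfl
    | some a => exact hτ a ho
  · intro τ hτ
    refine hf2 (extO τ false) ?_
    intro o ho
    cases o with
    | none => rfl
    | some a => exact hτ a ho

lemma sec_disjOcc_true {E₁ E₂ : Set (Option α → Bool)} :
    sec (DisjOcc E₁ E₂) true ⊆
      DisjOcc (sec E₁ true) (sec E₂ false) ∪ DisjOcc (sec E₁ false) (sec E₂ true) := by
  rintro ω ⟨P₁, P₂, hd, hf1, hf2⟩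
  by_cases hn : none ∈ P₂
  · -- then none ∉ P₁
    have hn1 : none ∉ P₁ := fun h => (Set.disjoint_left.1 hd h) hn
    refine Or.inr ⟨some ⁻¹' P₁, some ⁻¹' P₂, hd.preimage _, ?_, ?_⟩
    · intro τ hτ
      refine hf1 (extO τ false) ?_
      intro o ho
      cases o with
      | none => exact absurd ho hn1
      | some a => exact hτ a ho
    · intro τ hτ
      refine hf2 (extO τ true) ?_
      intro o ho
      cases o with
      | none => rfl
      | some a => exact hτ a ho
  · refine Or.inl ⟨some ⁻¹' P₁, some ⁻¹' P₂, hd.preimage _, ?_, ?_⟩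
    · intro τ hτ
      refine hf1 (extO τ true) ?_
      intro o ho
      cases o with
      | none => rfl
      | some a => exact hτ a ho
    · intro τ hτ
      refine hf2 (extO τ false) ?_
      intro o ho
      cases o with
      | none => exact absurd ho hn
      | some a => exact hτ a ho


section induction
universe u

open Classical in
noncomputable def CorePred (α : Type u) [Fintype α] : Prop :=
  ∀ (w : α → Bool → ℝ) (r : α → Bool → Bool → ℝ),
    (∀ i b, 0 ≤ w i b) → (∀ i a b, 0 ≤ r i a b) →
    (∀ i, w i true + w i false = 1) →
    (∀ i, r i true true + r i true false + r i false true + r i false false = 1) →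
    (∀ i, w i true ≤ r i true true + r i true false) →
    (∀ i, w i true ≤ r i true true + r i false true) →
    ∀ E₁ E₂ : Set (α → Bool), IncreasingEvent E₁ → IncreasingEvent E₂ →
      lhsSum w (DisjOcc E₁ E₂) ≤ rhsSum r E₁ E₂

lemma coreP_empty : CorePred PEmpty := by
  intro w r hw hr hnw hnr hd1 hd2 E₁ E₂ h₁ h₂
  classical
  unfold lhsSum rhsSum
  refine le_trans (le_of_eq (Eq.trans (sum_univ_inst _ _ _) (Fintype.sum_unique _)))
    (le_trans ?_ (le_of_eq (Eq.trans (sum_univ_inst _ _ _) (Fintype.sum_unique _)).symm))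
  split_ifs with hA hB
  · rw [Finset.prod_eq_one (fun (i : PEmpty) _ => i.elim),
      Finset.prod_eq_one (fun (i : PEmpty) _ => i.elim)]
  · obtain ⟨P₁, P₂, hd, hf1, hf2⟩ := hA
    exact absurd ⟨hf1 _ (fun i _ => i.elim), hf2 _ (fun i _ => i.elim)⟩ hB
  · exact Finset.prod_nonneg fun i _ => i.elim
  · exact le_rfl

variable {α : Type u} {β : Type u}

/-- reindexing of function spaces along an equivalence, with good defeqs. -/
def funCongr {γ : Type*} (e : α ≃ β) : (β → γ) ≃ (α → γ) where
  toFun ω := fun a => ω (e a)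
  invFun τ := fun b => τ (e.symm b)
  left_inv ω := funext fun b => by simp only [Equiv.apply_symm_apply]
  right_inv τ := funext fun a => by simp only [Equiv.symm_apply_apply]

lemma disjOcc_comp (e : α ≃ β) (E₁ E₂ : Set (β → Bool)) (τ : α → Bool)
    (h : (fun b => τ (e.symm b)) ∈ DisjOcc E₁ E₂) :
    τ ∈ DisjOcc ((fun ω : α → Bool => fun b => ω (e.symm b)) ⁻¹' E₁)
        ((fun ω : α → Bool => fun b => ω (e.symm b)) ⁻¹' E₂) := by
  obtain ⟨Q₁, Q₂, hd, hf1, hf2⟩ := h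
  refine ⟨e ⁻¹' Q₁, e ⁻¹' Q₂, hd.preimage _, ?_, ?_⟩
  · intro ω' hagree
    refine hf1 (fun b => ω' (e.symm b)) ?_
    intro j hj
    exact hagree (e.symm j) (by simpa using hj)
  · intro ω' hagree
    refine hf2 (fun b => ω' (e.symm b)) ?_
    intro j hj
    exact hagree (e.symm j) (by simpa using hj)

lemma coreP_equiv [Iα : Fintype α] [Iβ : Fintype β] (e : α ≃ β)
    (h : CorePred α) : CorePred β := by
  intro w r hw hr hnw hnr hd1 hd2 E₁ E₂ h₁ h₂
  classical
  have h₁' : IncreasingEvent ((fun ω : α → Bool => fun b => ω (e.symm b)) ⁻¹' E₁) :=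
    fun ω hω ω' hle => h₁ _ hω _ (fun b => hle (e.symm b))
  have h₂' : IncreasingEvent ((fun ω : α → Bool => fun b => ω (e.symm b)) ⁻¹' E₂) :=
    fun ω hω ω' hle => h₂ _ hω _ (fun b => hle (e.symm b))
  have key1 : lhsSum w (DisjOcc E₁ E₂) ≤ lhsSum (fun a => w (e a))
      (DisjOcc ((fun ω : α → Bool => fun b => ω (e.symm b)) ⁻¹' E₁)
        ((fun ω : α → Bool => fun b => ω (e.symm b)) ⁻¹' E₂)) := by
    unfold lhsSum
    have step := Fintype.sum_equiv (funCongr (γ := Bool) e)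
      (fun ω : β → Bool => if ω ∈ DisjOcc E₁ E₂ then ∏ j : β, w j (ω j) else 0)
      (fun τ : α → Bool => if (fun b => τ (e.symm b)) ∈ DisjOcc E₁ E₂ then
        ∏ j : β, w j (τ (e.symm j)) else 0)
      (fun ω => by
        have hb : ∀ b, (funCongr (γ := Bool) e ω) (e.symm b) = ω b := fun b => by
          show ω (e (e.symm b)) = ω b
          rw [e.apply_symm_apply]
        simp only [hb])
    refine le_trans (le_of_eq (Eq.trans (sum_univ_inst _ _ _) step)) ?_
    refine Finset.sum_le_sum fun τ _ => ?_
    beta_reduce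
    by_cases hg : (fun b => τ (e.symm b)) ∈ DisjOcc E₁ E₂
    · rw [if_pos hg, if_pos (disjOcc_comp e E₁ E₂ τ hg)]
      exact le_of_eq (Fintype.prod_equiv e
        (fun a => w (e a) (τ a)) (fun j => w j (τ (e.symm j)))
        (fun a => by
          show w (e a) (τ a) = w (e a) (τ (e.symm (e a)))
          rw [e.symm_apply_apply])).symm
    · rw [if_neg hg]
      split
      · exact Finset.prod_nonneg fun i _ => hw _ _
      · exact le_rfl
  have key2 : rhsSum (fun a => r (e a))
      ((fun ω : α → Bool => fun b => ω (e.symm b)) ⁻¹' E₁)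
      ((fun ω : α → Bool => fun b => ω (e.symm b)) ⁻¹' E₂) = rhsSum r E₁ E₂ := by
    unfold rhsSum
    have step := Fintype.sum_equiv (funCongr (γ := Bool × Bool) e)
      (fun ω : β → Bool × Bool => if ((fun i => (ω i).1) ∈ E₁ ∧ (fun i => (ω i).2) ∈ E₂) then
        ∏ j : β, r j (ω j).1 (ω j).2 else 0)
      (fun τ : α → Bool × Bool =>
        if ((fun b => (τ (e.symm b)).1) ∈ E₁ ∧ (fun b => (τ (e.symm b)).2) ∈ E₂) then
          ∏ j : β, r j (τ (e.symm j)).1 (τ (e.symm j)).2 else 0)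
      (fun ω => by
        have hb : ∀ b, (funCongr (γ := Bool × Bool) e ω) (e.symm b) = ω b := fun b => by
          show ω (e (e.symm b)) = ω b
          rw [e.apply_symm_apply]
        simp only [hb])
    refine Eq.symm (Eq.trans (sum_univ_inst _ _ _) (Eq.trans step
      (Eq.trans (Finset.sum_congr rfl fun τ _ => ?_) (sum_univ_inst _ _ _))))
    beta_reduce
    by_cases hc : ((fun b => (τ (e.symm b)).1) ∈ E₁ ∧ (fun b => (τ (e.symm b)).2) ∈ E₂)
    · rw [if_pos hc, if_pos (show ((fun a => (τ a).1) ∈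
          (fun ω : α → Bool => fun b => ω (e.symm b)) ⁻¹' E₁ ∧ (fun a => (τ a).2) ∈
          (fun ω : α → Bool => fun b => ω (e.symm b)) ⁻¹' E₂) from hc)]
      exact (Fintype.prod_equiv e
        (fun a => r (e a) (τ a).1 (τ a).2)
        (fun j => r j (τ (e.symm j)).1 (τ (e.symm j)).2)
        (fun a => by
          show r (e a) (τ a).1 (τ a).2 = r (e a) (τ (e.symm (e a))).1 (τ (e.symm (e a))).2
          rw [e.symm_apply_apply])).symm
    · rw [if_neg hc, if_neg (show ¬((fun a => (τ a).1) ∈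
          (fun ω : α → Bool => fun b => ω (e.symm b)) ⁻¹' E₁ ∧ (fun a => (τ a).2) ∈
          (fun ω : α → Bool => fun b => ω (e.symm b)) ⁻¹' E₂) from hc)]
  refine key1.trans (le_trans
    (h _ _ (fun i b => hw (e i) b) (fun i a b => hr (e i) a b) (fun i => hnw (e i))
      (fun i => hnr (e i)) (fun i => hd1 (e i)) (fun i => hd2 (e i)) _ _ h₁' h₂')
    (le_of_eq key2))

lemma coreP_option [Fintype α] (ih : CorePred α) : CorePred (Option α) := by
  intro w r hw hr hnw hnr hd1 hd2 E₁ E₂ h₁ h₂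
  have hw'0 : ∀ i b, 0 ≤ (fun a => w (some a)) i b := fun i b => hw _ _
  have hr'0 : ∀ i a b, 0 ≤ (fun a => r (some a)) i a b := fun i a b => hr _ _ _
  have IH := ih (fun a => w (some a)) (fun a => r (some a)) hw'0 hr'0
    (fun i => hnw _) (fun i => hnr _) (fun i => hd1 _) (fun i => hd2 _)
  have i1t : IncreasingEvent (sec E₁ true) := sec_increasing h₁ true
  have i1f : IncreasingEvent (sec E₁ false) := sec_increasing h₁ false
  have i2t : IncreasingEvent (sec E₂ true) := sec_increasing h₂ true
  have i2f : IncreasingEvent (sec E₂ false) := sec_increasing h₂ false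
  set U := DisjOcc (sec E₁ false) (sec E₂ true) with hU
  set V := DisjOcc (sec E₁ true) (sec E₂ false) with hV
  set Y11 := rhsSum (fun a => r (some a)) (sec E₁ true) (sec E₂ true) with hY11
  set Y10 := rhsSum (fun a => r (some a)) (sec E₁ true) (sec E₂ false) with hY10
  set Y01 := rhsSum (fun a => r (some a)) (sec E₁ false) (sec E₂ true) with hY01
  set Y00 := rhsSum (fun a => r (some a)) (sec E₁ false) (sec E₂ false) with hY00
  set x := lhsSum (fun a => w (some a)) (DisjOcc (sec E₁ false) (sec E₂ false)) with hx0
  set u := lhsSum (fun a => w (some a)) (U ∪ V) with hu0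
  have Ldec := lhsSum_option w (DisjOcc E₁ E₂)
  have Rdec := rhsSum_option r E₁ E₂
  have hsecT : lhsSum (fun a => w (some a)) (sec (DisjOcc E₁ E₂) true) ≤ u := by
    refine lhsSum_mono hw'0 ?_
    intro ω hω
    rcases sec_disjOcc_true hω with h | h
    · exact Or.inr h
    · exact Or.inl h
  have hsecF : lhsSum (fun a => w (some a)) (sec (DisjOcc E₁ E₂) false) ≤ x :=
    lhsSum_mono hw'0 sec_disjOcc_false
  have hxY : x ≤ Y00 := IH _ _ i1f i2f
  have hY1 : Y00 ≤ Y01 := rhsSum_mono hr'0 subset_rfl (sec_mono h₂)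
  have hY2 : Y00 ≤ Y10 := rhsSum_mono hr'0 (sec_mono h₁) subset_rfl
  have hY3 : Y01 ≤ Y11 := rhsSum_mono hr'0 (sec_mono h₁) subset_rfl
  have hY4 : Y10 ≤ Y11 := rhsSum_mono hr'0 subset_rfl (sec_mono h₂)
  have hu : u ≤ Y11 := by
    refine le_trans (lhsSum_mono hw'0 ?_) (IH _ _ i1t i2t)
    exact Set.union_subset (disjOcc_mono (sec_mono h₁) subset_rfl)
      (disjOcc_mono subset_rfl (sec_mono h₂))
  have hxu : x + u ≤ Y01 + Y10 := by
    have hss : x ≤ lhsSum (fun a => w (some a)) (U ∩ V) := by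
      refine lhsSum_mono hw'0 (Set.subset_inter ?_ ?_)
      · exact disjOcc_mono subset_rfl (sec_mono h₂)
      · exact disjOcc_mono (sec_mono h₁) subset_rfl
    have h2 := lhsSum_union_inter (fun a => w (some a)) U V
    have h3 : lhsSum (fun a => w (some a)) U ≤ Y01 := IH _ _ i1f i2t
    have h4 : lhsSum (fun a => w (some a)) V ≤ Y10 := IH _ _ i1t i2f
    linarith
  have hxn : 0 ≤ x := lhsSum_nonneg hw'0 _
  have main := scalar (w none true) (w none false)
      (r none false false) (r none false true) (r none true false) (r none true true)
      x u Y00 Y01 Y10 Y11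
      (hw none true) (hnw none)
      (hr none false false) (hr none false true) (hr none true false) (hr none true true)
      (by linarith [hnr none])
      (by linarith [hd1 none]) (by linarith [hd2 none])
      hxn hxY hY1 hY2 hY3 hY4 hu hxu
  have step : lhsSum w (DisjOcc E₁ E₂) ≤ w none false * x + w none true * u := by
    rw [Ldec]
    have t1 := mul_le_mul_of_nonneg_left hsecT (hw none true)
    have t2 := mul_le_mul_of_nonneg_left hsecF (hw none false)
    linarith
  rw [Rdec]
  refine step.trans (main.trans (le_of_eq ?_))
  ring

theorem coreP_all (α : Type u) [iα : Fintype α] : CorePred α := by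
  refine @Fintype.induction_empty_option (fun γ i => @CorePred γ i) ?_ coreP_empty ?_ α iα
  · intro γ δ iδ e h
    exact @coreP_equiv γ δ (@Fintype.ofEquiv γ δ iδ e.symm) iδ e h
  · intro γ iγ ih
    exact @coreP_option γ iγ ih

end induction
end BKaux

section translation
open MeasureTheory

lemma bern_apply_true (q : ENNReal) : bern q {true} = q := by
  simp [bern, Measure.dirac_apply']

lemma bern_apply_false (q : ENNReal) : bern q {false} = 1 - q := by
  simp [bern, Measure.dirac_apply']

lemma bern_isProb {q : ENNReal} (hq : q ≤ 1) : IsProbabilityMeasure (bern q) := by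
  constructor
  have : (Set.univ : Set Bool) = {true} ∪ {false} := by
    ext b; cases b <;> simp
  rw [this, measure_union (by simp) (measurableSet_singleton false),
    bern_apply_true, bern_apply_false, add_tsub_cancel_of_le hq]

open Classical in
lemma meas_eq_sum_s9 {Ω : Type*} [Fintype Ω] [MeasurableSpace Ω] [MeasurableSingletonClass Ω]
    (μ : Measure Ω) (S : Set Ω) : μ S = ∑ ω : Ω, if ω ∈ S then μ {ω} else 0 := by
  classical
  have hS : S = ⋃ ω ∈ Finset.univ.filter (· ∈ S), ({ω} : Set Ω) := by
    ext y; simp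
  conv_lhs => rw [hS]
  rw [measure_biUnion_finset ?_ (fun b _ => measurableSet_singleton b)]
  · rw [Finset.sum_filter]
  · intro a _ b _ hab
    simp [Set.disjoint_singleton, hab]

end translation

/-- **A generalised BK-type inequality.**  If `Q = ⊗_i ρ_i` where each `ρ_i` is a
probability measure on `{0,1}²` whose two marginals are Bernoulli of parameter at
least `p_i`, then `P(E₁ ∘ E₂) ≤ Q(E₁ × E₂)`. -/
theorem stmt9 {C : Type*} [Fintype C]
    (p : C → ENNReal) (hp : ∀ i, p i ≤ 1)
    (E₁ E₂ : Set (C → Bool))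
    (h₁ : IncreasingEvent E₁) (h₂ : IncreasingEvent E₂)
    (ρ : C → Measure (Bool × Bool)) [∀ i, IsProbabilityMeasure (ρ i)]
    (hfst : ∀ i, ∃ q : ENNReal, p i ≤ q ∧ q ≤ 1 ∧ (ρ i).map Prod.fst = bern q)
    (hsnd : ∀ i, ∃ q : ENNReal, p i ≤ q ∧ q ≤ 1 ∧ (ρ i).map Prod.snd = bern q) :
    Measure.pi (fun i => bern (p i)) (DisjOcc E₁ E₂) ≤
      Measure.pi ρ
        {f | (fun i => (f i).1) ∈ E₁ ∧ (fun i => (f i).2) ∈ E₂} := by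
  classical
  haveI hPB : ∀ i, IsProbabilityMeasure (bern (p i)) := fun i => bern_isProb (hp i)
  set wR : C → Bool → ℝ := fun i b => if b then (p i).toReal else (1 - p i).toReal with hwR
  set rR : C → Bool → Bool → ℝ := fun i a b => ((ρ i) {(a, b)}).toReal with hrR
  have hpne : ∀ i, p i ≠ ⊤ := fun i => ne_top_of_le_ne_top ENNReal.one_ne_top (hp i)
  have hone : ∀ i, (1 : ENNReal) - p i ≠ ⊤ :=
    fun i => ne_top_of_le_ne_top ENNReal.one_ne_top tsub_le_self
  -- nonnegativity
  have hwnn : ∀ i b, 0 ≤ wR i b := fun i b => by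
    cases b <;> simp [hwR, ENNReal.toReal_nonneg]
  have hrnn : ∀ i a b, 0 ≤ rR i a b := fun i a b => ENNReal.toReal_nonneg
  -- normalisation of w
  have hwn : ∀ i, wR i true + wR i false = 1 := fun i => by
    simp only [hwR, if_true, if_neg Bool.false_ne_true]
    rw [← ENNReal.toReal_add (hpne i) (hone i), add_tsub_cancel_of_le (hp i),
      ENNReal.toReal_one]
  -- normalisation of r
  have hrn : ∀ i, rR i true true + rR i true false + rR i false true + rR i false false
      = 1 := fun i => by
    have h := meas_eq_sum_s9 (ρ i) Set.univ
    rw [measure_univ] at h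
    simp only [Set.mem_univ, if_true] at h
    rw [Fintype.sum_prod_type, Fintype.sum_bool, Fintype.sum_bool, Fintype.sum_bool] at h
    have h' := congrArg ENNReal.toReal h
    rw [ENNReal.toReal_one] at h'
    rw [ENNReal.toReal_add, ENNReal.toReal_add, ENNReal.toReal_add] at h'
    · simp only [hrR]; linarith
    all_goals
      first
        | exact measure_ne_top _ _
        | exact ENNReal.add_ne_top.2 ⟨measure_ne_top _ _, measure_ne_top _ _⟩
  -- marginal domination
  have hd1 : ∀ i, wR i true ≤ rR i true true + rR i true false := fun i => by
    obtain ⟨q, hpq, hq1, hmap⟩ := hfst i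
    have hqne : q ≠ ⊤ := ne_top_of_le_ne_top ENNReal.one_ne_top hq1
    have hpre : (Prod.fst ⁻¹' {true} : Set (Bool × Bool))
        = {(true, true)} ∪ {(true, false)} := by
      ext x
      obtain ⟨a, b⟩ := x
      cases a <;> cases b <;> simp
    have hval : (ρ i) {(true, true)} + (ρ i) {(true, false)} = q := by
      rw [← measure_union (by simp) (measurableSet_singleton _), ← hpre,
        ← Measure.map_apply measurable_fst (measurableSet_singleton true), hmap,
        bern_apply_true]
    have := congrArg ENNReal.toReal hval
    rw [ENNReal.toReal_add (measure_ne_top _ _) (measure_ne_top _ _)] at this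
    simp only [hwR, if_true, hrR]
    rw [this]
    exact ENNReal.toReal_mono hqne hpq
  have hd2 : ∀ i, wR i true ≤ rR i true true + rR i false true := fun i => by
    obtain ⟨q, hpq, hq1, hmap⟩ := hsnd i
    have hqne : q ≠ ⊤ := ne_top_of_le_ne_top ENNReal.one_ne_top hq1
    have hpre : (Prod.snd ⁻¹' {true} : Set (Bool × Bool))
        = {(true, true)} ∪ {(false, true)} := by
      ext x
      obtain ⟨a, b⟩ := x
      cases a <;> cases b <;> simp
    have hval : (ρ i) {(true, true)} + (ρ i) {(false, true)} = q := by
      rw [← measure_union (by simp) (measurableSet_singleton _), ← hpre,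
        ← Measure.map_apply measurable_snd (measurableSet_singleton true), hmap,
        bern_apply_true]
    have := congrArg ENNReal.toReal hval
    rw [ENNReal.toReal_add (measure_ne_top _ _) (measure_ne_top _ _)] at this
    simp only [hwR, if_true, hrR]
    rw [this]
    exact ENNReal.toReal_mono hqne hpq
  -- convert the goal to real numbers
  rw [← ENNReal.toReal_le_toReal (measure_ne_top _ _) (measure_ne_top _ _)]
  have hL : (Measure.pi (fun i => bern (p i)) (DisjOcc E₁ E₂)).toReal
      = BKaux.lhsSum wR (DisjOcc E₁ E₂) := by
    rw [meas_eq_sum_s9, ENNReal.toReal_sum (fun a _ => by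
      split
      · exact measure_ne_top _ _
      · exact ENNReal.zero_ne_top)]
    unfold BKaux.lhsSum
    refine Finset.sum_congr rfl fun ω _ => ?_
    rw [apply_ite ENNReal.toReal]
    by_cases hω : ω ∈ DisjOcc E₁ E₂
    · rw [if_pos hω, if_pos hω,
        show ({ω} : Set (C → Bool)) = Set.pi Set.univ (fun i => {ω i}) from
          (Set.univ_pi_singleton ω).symm,
        Measure.pi_pi, ENNReal.toReal_prod]
      refine Finset.prod_congr rfl fun i _ => ?_
      cases hb : ω i
      · rw [bern_apply_false]; simp [hwR]
      · rw [bern_apply_true]; simp [hwR]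
    · rw [if_neg hω, if_neg hω, ENNReal.toReal_zero]
  have hR : (Measure.pi ρ {f | (fun i => (f i).1) ∈ E₁ ∧ (fun i => (f i).2) ∈ E₂}).toReal
      = BKaux.rhsSum rR E₁ E₂ := by
    rw [meas_eq_sum_s9, ENNReal.toReal_sum (fun a _ => by
      split
      · exact measure_ne_top _ _
      · exact ENNReal.zero_ne_top)]
    unfold BKaux.rhsSum
    refine Finset.sum_congr rfl fun f _ => ?_
    rw [apply_ite ENNReal.toReal]
    by_cases hf : ((fun i => (f i).1) ∈ E₁ ∧ (fun i => (f i).2) ∈ E₂)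
    · rw [if_pos (show f ∈ {g : C → Bool × Bool |
          (fun i => (g i).1) ∈ E₁ ∧ (fun i => (g i).2) ∈ E₂} from hf), if_pos hf,
        show ({f} : Set (C → Bool × Bool)) = Set.pi Set.univ (fun i => {f i}) from
          (Set.univ_pi_singleton f).symm,
        Measure.pi_pi, ENNReal.toReal_prod]
    · rw [if_neg (show f ∉ {g : C → Bool × Bool |
          (fun i => (g i).1) ∈ E₁ ∧ (fun i => (g i).2) ∈ E₂} from hf), if_neg hf,
        ENNReal.toReal_zero]
  rw [hL, hR]
  exact BKaux.coreP_all C wR rR hwnn hrnn hwn hrn hd1 hd2 E₁ E₂ h₁ h₂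
end

section
/- Let Λ and Σ be countable locally finite graphs, and suppose there exists a fibration π : V_Λ → V_Σ, i.e., a surjective map such that for every vertex x of Λ and every neighbour v of π(x) in Σ there is a neighbour y of x in Λ with π(y) = v. Then p_c^site(Λ) ≤ p_c^site(Σ). -/
set_option linter.unusedSectionVars false
set_option maxHeartbeats 1000000

open SimpleGraph


open MeasureTheory ProbabilityTheory

/-- `P` is the law of an i.i.d. family of Bernoulli(p) random variables indexed by `ι`:
all finite-dimensional marginals are product Bernoulli measures. -/
def iidMarginals {ι : Type*} (p : ENNReal) (P : Measure (ι → Bool)) : Prop :=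
  IsProbabilityMeasure P ∧ ∀ s : Finset ι,
    P.map (fun ω (i : s) => ω i) = Measure.pi (fun _ : s => bern p)

/-- The open cluster of `v` in site percolation with configuration `ω`. -/
def siteCluster {V : Type*} (G : SimpleGraph V) (ω : V → Bool) (v : V) : Set V :=
  {w | ∃ wk : G.Walk v w, ∀ u ∈ wk.support, ω u = true}

/-- Some site-percolation cluster is infinite. -/
def sitePercolates {V : Type*} (G : SimpleGraph V) (ω : V → Bool) : Prop :=
  ∃ v, (siteCluster G ω v).Infinite

/-- The critical parameter of site percolation. -/
noncomputable def pcSite {V : Type*} (G : SimpleGraph V) : ENNReal :=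
  sSup {p | p ≤ 1 ∧ ∀ P : Measure (V → Bool), iidMarginals p P →
    P {ω | sitePercolates G ω} = 0}

/-- The open cluster of `v` in bond percolation with configuration `ω`. -/
def bondCluster {V : Type*} (G : SimpleGraph V) (ω : Sym2 V → Bool) (v : V) : Set V :=
  {w | ∃ wk : G.Walk v w, ∀ e ∈ wk.edges, ω e = true}

/-- Some bond-percolation cluster is infinite. -/
def bondPercolates {V : Type*} (G : SimpleGraph V) (ω : Sym2 V → Bool) : Prop :=
  ∃ v, (bondCluster G ω v).Infinite

/-- The critical parameter of bond percolation. -/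
noncomputable def pcBond {V : Type*} (G : SimpleGraph V) : ENNReal :=
  sSup {p | p ≤ 1 ∧ ∀ P : Measure (Sym2 V → Bool), iidMarginals p P →
    P {ω | bondPercolates G ω} = 0}

/-- A fibration from `Λ` to `S`: a surjective map on vertices along which every edge
of `S` can be lifted with prescribed starting point. -/
def IsFibration {VL VS : Type*} (Λ : SimpleGraph VL) (S : SimpleGraph VS)
    (π : VL → VS) : Prop :=
  Function.Surjective π ∧
    ∀ x : VL, ∀ v : VS, S.Adj (π x) v → ∃ y : VL, Λ.Adj x y ∧ π y = v

section HasGe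

variable {α : Type*}

/-- `hasGe k s` : `s` contains at least `k` elements. -/
def hasGe (k : ℕ) (s : Set α) : Prop := ∃ t : Finset α, ↑t ⊆ s ∧ k ≤ t.card

lemma hasGe_zero (s : Set α) : hasGe 0 s := ⟨∅, by simp⟩

lemma hasGe.mono_set {k : ℕ} {s s' : Set α} (h : s ⊆ s') (hk : hasGe k s) : hasGe k s' := by
  obtain ⟨t, ht, hc⟩ := hk; exact ⟨t, ht.trans h, hc⟩

lemma hasGe.anti {k k' : ℕ} {s : Set α} (h : k' ≤ k) (hk : hasGe k s) : hasGe k' s := by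
  obtain ⟨t, ht, hc⟩ := hk; exact ⟨t, ht, h.trans hc⟩

lemma hasGe_insert_iff {k : ℕ} {w : α} {s : Set α} (hw : w ∉ s) :
    hasGe (k + 1) (insert w s) ↔ hasGe k s := by
  classical
  constructor
  · rintro ⟨t, ht, hc⟩
    refine ⟨t.erase w, ?_, ?_⟩
    · intro x hx
      simp only [Finset.coe_erase, Set.mem_diff] at hx
      rcases ht hx.1 with h | h
      · exact absurd h (by simpa using hx.2)
      · exact h
    · have h1 : t.card - 1 ≤ (t.erase w).card := Finset.pred_card_le_card_erase
      omega
  · rintro ⟨t, ht, hc⟩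
    refine ⟨insert w t, ?_, ?_⟩
    · intro x hx
      rcases Finset.mem_insert.mp (by simpa using hx) with rfl | h
      · exact Set.mem_insert _ _
      · exact Set.mem_insert_of_mem _ (ht h)
    · rw [Finset.card_insert_of_notMem (fun hwt => hw (ht hwt))]
      omega

lemma infinite_iff_forall_hasGe {s : Set α} : s.Infinite ↔ ∀ k, hasGe k s := by
  constructor
  · intro h k
    obtain ⟨t, ht, hc⟩ := h.exists_subset_card_eq k
    exact ⟨t, ht, hc.ge⟩
  · intro h
    by_contra hfin
    rw [Set.not_infinite] at hfin
    obtain ⟨t, ht, hc⟩ := h (hfin.toFinset.card + 1)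
    have : t.card ≤ hfin.toFinset.card :=
      Finset.card_le_card (fun x hx => hfin.mem_toFinset.mpr (ht hx))
    omega

end HasGe

section Dset

set_option linter.unusedSectionVars false

variable {V : Type*} (G : SimpleGraph V) [DecidableEq V]

/-- The union of open clusters of the starting points in `L`, avoiding `F`. -/
def dset (L : List V) (F : Finset V) (ω : V → Bool) : Set V :=
  {u | ∃ a ∈ L, ∃ wk : G.Walk a u, ∀ z ∈ wk.support, z ∉ F ∧ ω z = true}

variable {G}

lemma dset_nil {F : Finset V} {ω : V → Bool} : dset G ([] : List V) F ω = ∅ := by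
  ext u; simp [dset]

lemma dset_anti_F {L : List V} {F F' : Finset V} {ω : V → Bool} (h : F ⊆ F') :
    dset G L F' ω ⊆ dset G L F ω := by
  rintro u ⟨a, ha, wk, hwk⟩
  exact ⟨a, ha, wk, fun z hz => ⟨fun hzF => (hwk z hz).1 (h hzF), (hwk z hz).2⟩⟩

lemma dset_mono_list {L L' : List V} {F : Finset V} {ω : V → Bool}
    (h : ∀ a ∈ L, a ∈ L') : dset G L F ω ⊆ dset G L' F ω := by
  rintro u ⟨a, ha, wk, hwk⟩
  exact ⟨a, h a ha, wk, hwk⟩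

lemma dset_cons_mem {w : V} {L : List V} {F : Finset V} {ω : V → Bool} (hw : w ∈ F) :
    dset G (w :: L) F ω = dset G L F ω := by
  ext u
  constructor
  · rintro ⟨a, ha, wk, hwk⟩
    rcases List.mem_cons.mp ha with rfl | ha'
    · exact absurd hw (hwk a wk.start_mem_support).1
    · exact ⟨a, ha', wk, hwk⟩
  · exact fun h => dset_mono_list (fun a ha => List.mem_cons_of_mem _ ha) h

lemma dset_cons_closed {w : V} {L : List V} {F : Finset V} {ω : V → Bool}
    (hω : ω w = false) : dset G (w :: L) F ω = dset G L (insert w F) ω := by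
  ext u
  constructor
  · rintro ⟨a, ha, wk, hwk⟩
    rcases List.mem_cons.mp ha with rfl | ha'
    · have := (hwk a wk.start_mem_support).2
      rw [hω] at this; exact absurd this (by simp)
    · refine ⟨a, ha', wk, fun z hz => ⟨?_, (hwk z hz).2⟩⟩
      intro hzF
      rcases Finset.mem_insert.mp hzF with rfl | h
      · have := (hwk z hz).2; rw [hω] at this; exact absurd this (by simp)
      · exact (hwk z hz).1 h
  · intro h
    exact dset_mono_list (fun a ha => List.mem_cons_of_mem _ ha)
      (dset_anti_F (Finset.subset_insert _ _) h)

lemma not_mem_dset_insert {w : V} {L : List V} {F : Finset V} {ω : V → Bool} :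
    w ∉ dset G L (insert w F) ω := by
  rintro ⟨a, ha, wk, hwk⟩
  exact (hwk w wk.end_mem_support).1 (Finset.mem_insert_self _ _)

lemma dset_cons_open {w : V} {L : List V} {F : Finset V} {ω : V → Bool}
    [Fintype (G.neighborSet w)]
    (hwF : w ∉ F) (hω : ω w = true) :
    dset G (w :: L) F ω
      = insert w (dset G (L ++ (G.neighborFinset w).toList) (insert w F) ω) := by
  classical
  ext u
  constructor
  · rintro ⟨a, ha, wk, hwk⟩
    by_cases hu : u = w
    · subst hu; exact Set.mem_insert _ _
    refine Set.mem_insert_of_mem _ ?_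
    by_cases hwsup : w ∈ wk.support
    · -- split at the last occurrence of w
      have hwrev : w ∈ wk.reverse.support := by
        rw [Walk.support_reverse]; exact List.mem_reverse.mpr hwsup
      obtain ⟨r, hrcount, hrsub⟩ :
          ∃ r : G.Walk w u, r.support.count w = 1 ∧ ∀ z ∈ r.support, z ∈ wk.support := by
        refine ⟨(wk.reverse.takeUntil w hwrev).reverse, ?_, ?_⟩
        · rw [Walk.support_reverse, List.count_reverse]
          exact wk.reverse.count_support_takeUntil_eq_one hwrev
        · intro z hz
          rw [Walk.support_reverse, List.mem_reverse] at hz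
          have := Walk.support_takeUntil_subset wk.reverse hwrev hz
          rw [Walk.support_reverse] at this
          exact List.mem_reverse.mp this
      cases r with
      | nil => exact absurd rfl (Ne.symm hu)
      | cons hadj p =>
        rename_i c
        have hsupcons : (Walk.cons hadj p).support = w :: p.support := Walk.support_cons _ _
        have hwp : w ∉ p.support := by
          rw [hsupcons, List.count_cons_self] at hrcount
          have h0 : p.support.count w = 0 := by omega
          exact List.count_eq_zero.mp h0
        refine ⟨c, ?_, p, ?_⟩
        · refine List.mem_append.mpr (Or.inr ?_)
          rw [Finset.mem_toList, mem_neighborFinset]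
          exact hadj
        · intro z hz
          have hzwk : z ∈ wk.support := hrsub z (by rw [hsupcons]; exact List.mem_cons_of_mem _ hz)
          refine ⟨?_, (hwk z hzwk).2⟩
          intro hzF
          rcases Finset.mem_insert.mp hzF with rfl | h
          · exact hwp hz
          · exact (hwk z hzwk).1 h
    · -- walk avoids w entirely
      have haL : a ∈ L := by
        rcases List.mem_cons.mp ha with rfl | h
        · exact absurd wk.start_mem_support hwsup
        · exact h
      refine ⟨a, List.mem_append.mpr (Or.inl haL), wk, fun z hz => ⟨?_, (hwk z hz).2⟩⟩
      intro hzF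
      rcases Finset.mem_insert.mp hzF with rfl | h
      · exact hwsup hz
      · exact (hwk z hz).1 h
  · intro hu
    have hwmem : w ∈ dset G (w :: L) F ω := by
      refine ⟨w, List.mem_cons_self, Walk.nil, ?_⟩
      intro z hz
      simp only [Walk.support_nil, List.mem_singleton] at hz
      subst hz; exact ⟨hwF, hω⟩
    rcases Set.mem_insert_iff.mp hu with rfl | hu'
    · exact hwmem
    · obtain ⟨a, ha, wk, hwk⟩ := hu'
      rcases List.mem_append.mp ha with haL | haN
      · exact ⟨a, List.mem_cons_of_mem _ haL, wk, fun z hz =>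
          ⟨fun hzF => (hwk z hz).1 (Finset.mem_insert_of_mem hzF), (hwk z hz).2⟩⟩
      · have hadj : G.Adj w a := by
          rw [Finset.mem_toList, mem_neighborFinset] at haN; exact haN
        refine ⟨w, List.mem_cons_self, Walk.cons hadj wk, ?_⟩
        intro z hz
        rw [Walk.support_cons] at hz
        rcases List.mem_cons.mp hz with rfl | hz'
        · exact ⟨hwF, hω⟩
        · exact ⟨fun hzF => (hwk z hz').1 (Finset.mem_insert_of_mem hzF), (hwk z hz').2⟩


end Dset

section Meas

variable {ι : Type*} [Countable ι] {p : ENNReal} {Q : Measure (ι → Bool)}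

lemma measurableSet_bool (s : Set Bool) : MeasurableSet s :=
  (Set.to_countable s).measurableSet

lemma bern_apply (b : Bool) : bern p {b} = bif b then p else 1 - p := by
  cases b <;>
    simp [bern, Measure.dirac_apply' _ (measurableSet_bool _), Set.indicator,
      Measure.add_apply]

lemma bern_univ (hp : p ≤ 1) : bern p Set.univ = 1 := by
  simp [bern, Measure.add_apply]
  exact add_tsub_cancel_of_le hp

lemma bern_isFinite (hp : p ≤ 1) : IsFiniteMeasure (bern p) :=
  ⟨by rw [bern_univ hp]; exact ENNReal.one_lt_top⟩

/-- Probability of a finite cylinder under an iid measure. -/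
lemma cylEq (hQ : iidMarginals p Q) (hp : p ≤ 1) (t : Finset ι) (B : ι → Set Bool) :
    Q {ω | ∀ i ∈ t, ω i ∈ B i} = ∏ i ∈ t, bern p (B i) := by
  haveI := bern_isFinite hp
  have hrestr : Measurable (fun ω (i : t) => ω i : (ι → Bool) → (t → Bool)) :=
    measurable_pi_lambda _ fun i => measurable_pi_apply _
  have hset : {ω : ι → Bool | ∀ i ∈ t, ω i ∈ B i}
      = (fun ω (i : t) => ω i) ⁻¹' (Set.univ.pi fun i : t => B i) := by
    ext ω
    simp [Set.mem_pi, Subtype.forall]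
  rw [hset, ← Measure.map_apply hrestr
      (MeasurableSet.univ_pi fun i => measurableSet_bool _), hQ.2 t,
    Measure.pi_pi]
  exact Finset.prod_coe_sort t (fun i => bern p (B i))

/-- The coordinate σ-algebra at `i`. -/
def cm (i : ι) : MeasurableSpace (ι → Bool) :=
  MeasurableSpace.comap (fun ω => ω i) inferInstance

/-- The σ-algebra generated by coordinates outside `F`. -/
def genOff (F : Finset ι) : MeasurableSpace (ι → Bool) :=
  ⨆ (i : ι) (_ : i ∉ F), cm i

lemma cm_le (i : ι) : cm i ≤ (inferInstance : MeasurableSpace (ι → Bool)) := by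
  unfold cm
  rw [← measurable_iff_comap_le]
  exact measurable_pi_apply i

lemma genOff_le (F : Finset ι) :
    genOff F ≤ (inferInstance : MeasurableSpace (ι → Bool)) :=
  iSup_le fun i => iSup_le fun _ => cm_le i

lemma measurableSet_cm {i : ι} (s : Set Bool) :
    MeasurableSet[cm i] ((fun ω : ι → Bool => ω i) ⁻¹' s) :=
  ⟨s, measurableSet_bool s, rfl⟩

lemma measurableSet_coord_genOff {F : Finset ι} {i : ι} (hi : i ∉ F) (s : Set Bool) :
    MeasurableSet[genOff F] ((fun ω : ι → Bool => ω i) ⁻¹' s) := by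
  have h1 : cm i ≤ genOff F := le_iSup_of_le i (by simp [hi])
  exact h1 _ (measurableSet_cm s)

/-- cylinders avoiding `F` -/
def cylOff (F : Finset ι) : Set (Set (ι → Bool)) :=
  {A | ∃ t : Finset ι, (∀ i ∈ t, i ∉ F) ∧ ∃ B : ι → Set Bool,
    A = {ω | ∀ i ∈ t, ω i ∈ B i}}

lemma isPiSystem_cylOff (F : Finset ι) : IsPiSystem (cylOff F) := by
  classical
  rintro A1 ⟨t1, ht1, B1, rfl⟩ A2 ⟨t2, ht2, B2, rfl⟩ -
  refine ⟨t1 ∪ t2, ?_, fun i => {b | (i ∈ t1 → b ∈ B1 i) ∧ (i ∈ t2 → b ∈ B2 i)}, ?_⟩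
  · intro i hi
    rcases Finset.mem_union.mp hi with h | h
    · exact ht1 i h
    · exact ht2 i h
  · ext ω
    constructor
    · rintro ⟨h1, h2⟩ i hi
      exact ⟨fun h => h1 i h, fun h => h2 i h⟩
    · intro h
      exact ⟨fun i hi => (h i (Finset.mem_union_left _ hi)).1 hi,
        fun i hi => (h i (Finset.mem_union_right _ hi)).2 hi⟩

lemma genOff_eq_generateFrom (F : Finset ι) :
    genOff F = MeasurableSpace.generateFrom (cylOff F) := by
  apply le_antisymm
  · refine iSup_le fun i => iSup_le fun hi => ?_
    intro s hs
    obtain ⟨B, -, rfl⟩ := hs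
    apply MeasurableSpace.measurableSet_generateFrom
    refine ⟨{i}, by simpa using hi, fun _ => B, ?_⟩
    ext ω; simp
  · refine MeasurableSpace.generateFrom_le fun A hA => ?_
    obtain ⟨t, ht, B, rfl⟩ := hA
    have : {ω : ι → Bool | ∀ i ∈ t, ω i ∈ B i}
        = ⋂ (i : ι) (_ : i ∈ t), (fun ω : ι → Bool => ω i) ⁻¹' B i := by
      ext ω; simp
    rw [this]
    exact MeasurableSet.iInter fun i => MeasurableSet.iInter fun hi =>
      measurableSet_coord_genOff (ht i hi) _

/-- Conditional independence of a single fresh coordinate from events determined by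
coordinates outside `F`. -/
lemma bern_le_one (hp : p ≤ 1) (s : Set Bool) : bern p s ≤ 1 := by
  calc bern p s ≤ bern p Set.univ := measure_mono (Set.subset_univ s)
  _ = 1 := bern_univ hp

/-- Conditional independence of a single fresh coordinate from events determined by
coordinates outside `F`. -/
lemma indep_coord (hQ : iidMarginals p Q) (hp : p ≤ 1) {F : Finset ι} {w : ι}
    (hw : w ∈ F) (b : Bool) :
    ∀ {A : Set (ι → Bool)}, MeasurableSet[genOff F] A →
      Q ({ω | ω w = b} ∩ A) = bern p {b} * Q A := by
  classical
  haveI := hQ.1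
  have hwb : MeasurableSet {ω : ι → Bool | ω w = b} := by
    have : {ω : ι → Bool | ω w = b} = (fun ω => ω w) ⁻¹' {b} := rfl
    rw [this]; exact measurable_pi_apply w (measurableSet_bool _)
  have hQw : Q {ω | ω w = b} = bern p {b} := by
    have : {ω : ι → Bool | ω w = b} = {ω | ∀ i ∈ ({w} : Finset ι), ω i ∈ ({b} : Set Bool)} := by
      ext ω; simp
    rw [this, cylEq hQ hp]
    simp
  intro A hA
  refine MeasurableSpace.induction_on_inter (m := genOff F)
    (C := fun A _ => Q ({ω | ω w = b} ∩ A) = bern p {b} * Q A)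
    (genOff_eq_generateFrom F) (isPiSystem_cylOff F) (by simp) ?_ ?_ ?_ A hA
  · -- basic
    rintro A ⟨t, ht, B, rfl⟩
    have hwt : w ∉ t := fun h => ht w h hw
    set B' : ι → Set Bool := fun i => {x | (i = w → x = b) ∧ (i ∈ t → x ∈ B i)} with hB'
    have hset : {ω : ι → Bool | ω w = b} ∩ {ω | ∀ i ∈ t, ω i ∈ B i}
        = {ω | ∀ i ∈ insert w t, ω i ∈ B' i} := by
      ext ω
      simp only [Set.mem_inter_iff, Set.mem_setOf_eq, Finset.mem_insert, hB']
      constructor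
      · rintro ⟨h1, h2⟩ i hi
        exact ⟨fun hiw => by rw [hiw]; exact h1, fun hit => h2 i hit⟩
      · intro h
        exact ⟨(h w (Or.inl rfl)).1 rfl, fun i hi => (h i (Or.inr hi)).2 hi⟩
    rw [hset, cylEq hQ hp, cylEq hQ hp, Finset.prod_insert hwt]
    congr 1
    · congr 1
      ext x
      simp [hB', hwt]
    · apply Finset.prod_congr rfl
      intro i hi
      have hiw : i ≠ w := fun h => hwt (h ▸ hi)
      congr 1
      ext x
      simp [hB', hi, hiw]
  · -- compl
    intro A hAgen ih
    have hAm : MeasurableSet A := genOff_le F _ hAgen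
    have h1 : Q ({ω | ω w = b} ∩ A) + Q ({ω | ω w = b} ∩ Aᶜ) = Q {ω | ω w = b} := by
      have h := measure_inter_add_diff (μ := Q) {ω : ι → Bool | ω w = b} hAm
      rwa [Set.diff_eq] at h
    have h3 : bern p {b} * Q A + bern p {b} * Q Aᶜ = bern p {b} := by
      rw [← mul_add]
      have h : Q A + Q Aᶜ = 1 := by
        rw [measure_add_measure_compl hAm, measure_univ]
      rw [h, mul_one]
    rw [ih, hQw] at h1
    have heq : bern p {b} * Q A + Q ({ω | ω w = b} ∩ Aᶜ) = bern p {b} * Q A + bern p {b} * Q Aᶜ := by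
      rw [h1, h3]
    have hne : bern p {b} * Q A ≠ ⊤ := by
      apply ENNReal.mul_ne_top
      · exact ne_top_of_le_ne_top ENNReal.one_ne_top (bern_le_one hp _)
      · exact measure_ne_top _ _
    rwa [ENNReal.add_right_inj hne] at heq
  · -- iUnion
    intro f hdisj hfm ih
    have hfm' : ∀ n, MeasurableSet (f n) := fun n => genOff_le F _ (hfm n)
    have hd2 : Pairwise (Function.onFun Disjoint fun n => {ω : ι → Bool | ω w = b} ∩ f n) :=
      fun i j hij => ((hdisj hij).mono Set.inter_subset_right Set.inter_subset_right)
    rw [Set.inter_iUnion, measure_iUnion hd2 (fun n => hwb.inter (hfm' n)),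
      measure_iUnion hdisj hfm']
    simp_rw [ih]
    rw [ENNReal.tsum_mul_left]

end Meas


section WalkCountable

variable {V : Type*} {G : SimpleGraph V}

lemma walk_support_injective {a b : V} :
    Function.Injective (fun w : G.Walk a b => w.support) := by
  intro w1
  induction w1 with
  | nil =>
    intro w2 h
    dsimp only at h
    cases w2 with
    | nil => rfl
    | cons hadj p =>
      exfalso
      have hl := congrArg List.length h
      rw [Walk.support_nil, Walk.support_cons] at hl
      simp only [List.length_cons, List.length_nil, Walk.length_support] at hl
      omega
  | cons hadj p ih =>
    intro w2 h
    dsimp only at h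
    cases w2 with
    | nil =>
      exfalso
      have hl := congrArg List.length h
      rw [Walk.support_nil, Walk.support_cons] at hl
      simp only [List.length_cons, List.length_nil, Walk.length_support] at hl
      omega
    | cons hadj' p' =>
      rw [Walk.support_cons, Walk.support_cons] at h
      have h2 : p.support = p'.support := by injection h
      have hc := h2
      rw [Walk.support_eq_cons p, Walk.support_eq_cons p'] at hc
      injection hc with hcc htl
      subst hcc
      rw [ih h2]

instance walkCountable [Countable V] (a b : V) : Countable (G.Walk a b) :=
  walk_support_injective.countable

end WalkCountable

section DsetMeas

variable {V : Type*} [Countable V] [DecidableEq V] {G : SimpleGraph V}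

lemma measurableSet_dset_event (k : ℕ) (L : List V) (F : Finset V) :
    MeasurableSet[genOff F] {ω : V → Bool | hasGe k (dset G L F ω)} := by
  have hmem : ∀ u : V, MeasurableSet[genOff F] {ω : V → Bool | u ∈ dset G L F ω} := by
    intro u
    have h1 : {ω : V → Bool | u ∈ dset G L F ω}
        = ⋃ (a : V) (_ : a ∈ L) (wk : G.Walk a u),
            {ω : V → Bool | ∀ z ∈ wk.support, z ∉ F ∧ ω z = true} := by
      ext ω
      simp [dset, Set.mem_iUnion]
    rw [h1]
    refine MeasurableSet.iUnion fun a => MeasurableSet.iUnion fun ha =>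
      MeasurableSet.iUnion fun wk => ?_
    by_cases hFsup : ∀ z ∈ wk.support, z ∉ F
    · have h2 : {ω : V → Bool | ∀ z ∈ wk.support, z ∉ F ∧ ω z = true}
          = ⋂ (z : V) (_ : z ∈ wk.support), (fun ω : V → Bool => ω z) ⁻¹' {true} := by
        ext ω
        simp only [Set.mem_setOf_eq, Set.mem_iInter, Set.mem_preimage, Set.mem_singleton_iff]
        constructor
        · intro h z hz; exact (h z hz).2
        · intro h z hz; exact ⟨hFsup z hz, h z hz⟩
      rw [h2]
      exact MeasurableSet.iInter fun z => MeasurableSet.iInter fun hz =>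
        measurableSet_coord_genOff (hFsup z hz) _
    · have h2 : {ω : V → Bool | ∀ z ∈ wk.support, z ∉ F ∧ ω z = true} = ∅ := by
        push_neg at hFsup
        obtain ⟨z, hz, hzF⟩ := hFsup
        ext ω
        simp only [Set.mem_setOf_eq, Set.mem_empty_iff_false, iff_false, not_forall]
        exact ⟨z, hz, fun h => h.1 hzF⟩
      rw [h2]
      exact @MeasurableSet.empty _ (genOff F)
  have h3 : {ω : V → Bool | hasGe k (dset G L F ω)}
      = ⋃ (t : Finset V) (_ : k ≤ t.card), ⋂ (u : V) (_ : u ∈ t),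
          {ω : V → Bool | u ∈ dset G L F ω} := by
    ext ω
    simp only [Set.mem_setOf_eq, Set.mem_iUnion, Set.mem_iInter]
    constructor
    · rintro ⟨t, ht, hc⟩; exact ⟨t, hc, fun u hu => ht hu⟩
    · rintro ⟨t, hc, h⟩; exact ⟨t, fun u hu => h u hu, hc⟩
  rw [h3]
  exact MeasurableSet.iUnion fun t => MeasurableSet.iUnion fun _ =>
    MeasurableSet.iInter fun u => MeasurableSet.iInter fun hu => hmem u

lemma measurableSet_dset_event' (k : ℕ) (L : List V) (F : Finset V) :
    MeasurableSet {ω : V → Bool | hasGe k (dset G L F ω)} :=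
  genOff_le F _ (measurableSet_dset_event k L F)

lemma not_hasGe_succ_empty {α : Type*} (k : ℕ) : ¬ hasGe (k + 1) (∅ : Set α) := by
  rintro ⟨t, ht, hc⟩
  obtain ⟨x, hx⟩ := Finset.card_pos.mp (Nat.lt_of_lt_of_le (Nat.succ_pos k) hc)
  exact ht hx

/-- The one-step exploration splitting identity. -/
lemma split_dset {p : ENNReal} {Q : Measure (V → Bool)}
    (hQ : iidMarginals p Q) (hp : p ≤ 1)
    {w : V} [Fintype (G.neighborSet w)] (L : List V) {F : Finset V} (hw : w ∉ F) (k : ℕ) :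
    Q {ω | hasGe (k + 1) (dset G (w :: L) F ω)}
      = p * Q {ω | hasGe k (dset G (L ++ (G.neighborFinset w).toList) (insert w F) ω)}
        + (1 - p) * Q {ω | hasGe (k + 1) (dset G L (insert w F) ω)} := by
  have hwb : ∀ b : Bool, MeasurableSet {ω : V → Bool | ω w = b} := by
    intro b
    have : {ω : V → Bool | ω w = b} = (fun ω : V → Bool => ω w) ⁻¹' {b} := rfl
    rw [this]; exact measurable_pi_apply w (measurableSet_bool _)
  have hsplit : {ω : V → Bool | hasGe (k + 1) (dset G (w :: L) F ω)}
      = ({ω | ω w = true}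
          ∩ {ω | hasGe k (dset G (L ++ (G.neighborFinset w).toList) (insert w F) ω)})
        ∪ ({ω | ω w = false} ∩ {ω | hasGe (k + 1) (dset G L (insert w F) ω)}) := by
    ext ω
    simp only [Set.mem_union, Set.mem_inter_iff, Set.mem_setOf_eq]
    cases hb : ω w with
    | false =>
      rw [dset_cons_closed hb]
      simp
    | true =>
      rw [dset_cons_open hw hb, hasGe_insert_iff not_mem_dset_insert]
      simp
  have hdisj : Disjoint
      ({ω : V → Bool | ω w = true}
        ∩ {ω | hasGe k (dset G (L ++ (G.neighborFinset w).toList) (insert w F) ω)})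
      ({ω : V → Bool | ω w = false} ∩ {ω | hasGe (k + 1) (dset G L (insert w F) ω)}) := by
    rw [Set.disjoint_left]
    rintro ω ⟨h1, -⟩ ⟨h2, -⟩
    rw [Set.mem_setOf_eq] at h1 h2
    rw [h1] at h2
    exact Bool.noConfusion h2
  rw [hsplit, measure_union hdisj ((hwb false).inter (measurableSet_dset_event' _ _ _)),
    indep_coord hQ hp (Finset.mem_insert_self w F) true (measurableSet_dset_event _ _ _),
    indep_coord hQ hp (Finset.mem_insert_self w F) false (measurableSet_dset_event _ _ _),
    bern_apply, bern_apply]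
  rfl

end DsetMeas

section Key

variable {VB VT : Type*} [Countable VB] [Countable VT]
  {B : SimpleGraph VB} {T : SimpleGraph VT}
  [∀ v, Fintype (B.neighborSet v)] [∀ v, Fintype (T.neighborSet v)]
  {φ : VT → VB}
  {p : ENNReal} {Q : Measure (VB → Bool)} {P : Measure (VT → Bool)}

lemma key_lemma [DecidableEq VB] [DecidableEq VT]
    (hQ : iidMarginals p Q) (hP : iidMarginals p P) (hp : p ≤ 1)
    (hlift : ∀ x v, B.Adj (φ x) v → ∃ y, T.Adj x y ∧ φ y = v) :
    ∀ (k : ℕ) (LT : List VT) (FB : Finset VB) (FT : Finset VT),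
      (∀ y ∈ FT, φ y ∈ FB) →
      Q {ω | hasGe k (dset B (LT.map φ) FB ω)} ≤ P {ω | hasGe k (dset T LT FT ω)} := by
  haveI := hQ.1
  haveI := hP.1
  intro k
  induction k with
  | zero =>
    intro LT FB FT hF
    have h1 : {ω : VB → Bool | hasGe 0 (dset B (LT.map φ) FB ω)} = Set.univ :=
      Set.eq_univ_of_forall fun ω => hasGe_zero _
    have h2 : {ω : VT → Bool | hasGe 0 (dset T LT FT ω)} = Set.univ :=
      Set.eq_univ_of_forall fun ω => hasGe_zero _
    rw [h1, h2, measure_univ, measure_univ]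
  | succ k ihk =>
    intro LT
    induction LT with
    | nil =>
      intro FB FT hF
      have h1 : {ω : VB → Bool | hasGe (k + 1) (dset B (([] : List VT).map φ) FB ω)} = ∅ := by
        ext ω
        simp only [List.map_nil, Set.mem_setOf_eq, Set.mem_empty_iff_false, iff_false]
        rw [dset_nil]
        exact not_hasGe_succ_empty k
      rw [h1, measure_empty]
      exact zero_le
    | cons y L ih =>
      intro FB FT hF
      by_cases hwF : φ y ∈ FB
      · -- base side skips
        have hBev : {ω : VB → Bool | hasGe (k + 1) (dset B ((y :: L).map φ) FB ω)}
            = {ω | hasGe (k + 1) (dset B (L.map φ) FB ω)} := by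
          ext ω
          simp only [Set.mem_setOf_eq, List.map_cons]
          rw [dset_cons_mem hwF]
        rw [hBev]
        by_cases hyF : y ∈ FT
        · have hTev : {ω : VT → Bool | hasGe (k + 1) (dset T (y :: L) FT ω)}
              = {ω | hasGe (k + 1) (dset T L FT ω)} := by
            ext ω
            simp only [Set.mem_setOf_eq]
            rw [dset_cons_mem hyF]
          rw [hTev]
          exact ih FB FT hF
        · refine le_trans (ih FB (insert y FT) ?_) (measure_mono ?_)
          · intro z hz
            rcases Finset.mem_insert.mp hz with rfl | hz'
            · exact hwF
            · exact hF z hz'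
          · intro ω hω
            exact hω.mono_set
              ((dset_anti_F (Finset.subset_insert _ _)).trans
                (dset_mono_list fun a ha => List.mem_cons_of_mem _ ha))
      · have hyF : y ∉ FT := fun h => hwF (hF y h)
        -- construct lifts of the neighbours of φ y
        have hlift' : ∀ u ∈ (B.neighborFinset (φ y)).toList, ∃ z, T.Adj y z ∧ φ z = u := by
          intro u hu
          rw [Finset.mem_toList, mem_neighborFinset] at hu
          exact hlift y u hu
        choose liftF hliftAdj hliftEq using hlift'
        set lifts : List VT := (B.neighborFinset (φ y)).toList.attach.map
          (fun u => liftF u.1 u.2) with hlifts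
        have hmapφ : lifts.map φ = (B.neighborFinset (φ y)).toList := by
          rw [hlifts, List.map_map]
          have : (fun u : {x // x ∈ (B.neighborFinset (φ y)).toList} => φ (liftF u.1 u.2))
              = fun u => u.1 := by
            funext u
            exact hliftEq u.1 u.2
          rw [show φ ∘ (fun u : {x // x ∈ (B.neighborFinset (φ y)).toList} => liftF u.1 u.2)
              = fun u => u.1 from this]
          exact List.attach_map_subtype_val _
        have hBmap : ((y :: L).map φ) = φ y :: L.map φ := List.map_cons
        rw [hBmap, split_dset hQ hp (L.map φ) hwF k, split_dset hP hp L hyF k]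
        refine add_le_add (mul_le_mul_right ?_ p) (mul_le_mul_right ?_ (1 - p))
        · -- open branch
          have h1 := ihk (L ++ lifts) (insert (φ y) FB) (insert y FT) ?_
          · rw [List.map_append, hmapφ] at h1
            refine h1.trans (measure_mono ?_)
            intro ω hω
            refine hω.mono_set (dset_mono_list ?_)
            intro a ha
            rcases List.mem_append.mp ha with h | h
            · exact List.mem_append.mpr (Or.inl h)
            · refine List.mem_append.mpr (Or.inr ?_)
              rw [hlifts] at h
              obtain ⟨u, hu, rfl⟩ := List.mem_map.mp h
              rw [Finset.mem_toList, mem_neighborFinset]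
              exact hliftAdj u.1 u.2
          · intro z hz
            rcases Finset.mem_insert.mp hz with rfl | hz'
            · exact Finset.mem_insert_self _ _
            · exact Finset.mem_insert_of_mem (hF z hz')
        · -- closed branch
          refine ih (insert (φ y) FB) (insert y FT) ?_
          intro z hz
          rcases Finset.mem_insert.mp hz with rfl | hz'
          · exact Finset.mem_insert_self _ _
          · exact Finset.mem_insert_of_mem (hF z hz')

end Key

section Assemble

lemma dset_singleton {V : Type*} {G : SimpleGraph V} {v : V} {ω : V → Bool} :
    dset G ([v] : List V) ∅ ω = {w | ∃ wk : G.Walk v w, ∀ u ∈ wk.support, ω u = true} := by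
  ext u
  constructor
  · rintro ⟨a, ha, wk, hwk⟩
    rcases List.mem_cons.mp ha with rfl | h
    · exact ⟨wk, fun z hz => (hwk z hz).2⟩
    · exact absurd h List.not_mem_nil
  · rintro ⟨wk, hwk⟩
    exact ⟨v, List.mem_cons_self, wk, fun z hz => ⟨Finset.notMem_empty z, hwk z hz⟩⟩

lemma measure_ext_finite {α : Type*} [Fintype α] [MeasurableSpace α]
    (hsing : ∀ a : α, MeasurableSet ({a} : Set α))
    {μ ν : Measure α} (h : ∀ a, μ {a} = ν {a}) : μ = ν := by
  classical
  ext s hs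
  have hrw : s = ⋃ a ∈ s.toFinite.toFinset, ({a} : Set α) := by
    ext x
    simp only [Set.mem_iUnion, Set.Finite.mem_toFinset, Set.mem_singleton_iff]
    constructor
    · intro hx
      exact ⟨x, hx, rfl⟩
    · rintro ⟨a, ha, rfl⟩
      exact ha
  have hd : Set.PairwiseDisjoint (↑s.toFinite.toFinset : Set α) (fun a => ({a} : Set α)) := by
    intro a _ b _ hab
    exact Set.disjoint_singleton.mpr hab
  rw [hrw, measure_biUnion_finset hd fun a _ => hsing a,
    measure_biUnion_finset hd fun a _ => hsing a]
  exact Finset.sum_congr rfl fun a _ => h a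

lemma singleton_measurable_pi {α : Type*} [Countable α] (g : α → Bool) :
    MeasurableSet ({g} : Set (α → Bool)) := by
  have : ({g} : Set (α → Bool)) = Set.univ.pi fun a => ({g a} : Set Bool) := by
    ext f
    simp [funext_iff, Set.mem_pi]
  rw [this]
  exact MeasurableSet.univ_pi fun a => measurableSet_bool _

lemma iid_map_equiv {ι κ : Type*} [Countable ι] [Countable κ] {p : ENNReal}
    {Q : Measure (ι → Bool)} (hQ : iidMarginals p Q) (hp : p ≤ 1) (e : κ ≃ ι) :
    iidMarginals p (Q.map (fun ω (x : κ) => ω (e x))) := by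
  classical
  haveI := hQ.1
  haveI := bern_isFinite hp
  have hU : Measurable (fun ω : ι → Bool => fun x : κ => ω (e x)) :=
    measurable_pi_lambda _ fun x => measurable_pi_apply _
  refine ⟨Measure.isProbabilityMeasure_map hU.aemeasurable, ?_⟩
  intro s
  have hrestr : Measurable (fun ω : κ → Bool => fun i : s => ω i) :=
    measurable_pi_lambda _ fun i => measurable_pi_apply _
  refine measure_ext_finite (fun g => singleton_measurable_pi g) fun g => ?_
  -- LHS
  rw [Measure.map_map hrestr hU, Measure.map_apply (hrestr.comp hU) (singleton_measurable_pi g)]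
  set c : ι → Bool := fun i => if h : e.symm i ∈ s then g ⟨e.symm i, h⟩ else true with hc
  have hpre : ((fun ω : ι → Bool => fun i : s => ω (e i)) ⁻¹' {g})
      = {ω : ι → Bool | ∀ i ∈ s.image (fun x => e x), ω i ∈ ({c i} : Set Bool)} := by
    ext ω
    simp only [Set.mem_preimage, Set.mem_singleton_iff, funext_iff, Set.mem_setOf_eq]
    constructor
    · intro h i hi
      obtain ⟨x, hx, rfl⟩ := Finset.mem_image.mp hi
      have : c (e x) = g ⟨x, hx⟩ := by
        rw [hc]
        simp [Equiv.symm_apply_apply, hx]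
      rw [this]
      exact h ⟨x, hx⟩
    · intro h x
      have hmem : e x.1 ∈ s.image (fun x => e x) := Finset.mem_image_of_mem _ x.2
      have := h _ hmem
      rw [this, hc]
      simp [Equiv.symm_apply_apply]
  rw [show (fun ω : ι → Bool => fun i : s => ω (e i))
        = (fun ω : κ → Bool => fun i : s => ω i) ∘ (fun ω (x : κ) => ω (e x)) from rfl] at hpre
  rw [hpre, cylEq hQ hp]
  -- RHS
  have hsingpi : ({g} : Set (s → Bool)) = Set.univ.pi fun i : s => ({g i} : Set Bool) := by
    ext f
    simp [funext_iff, Set.mem_pi]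
  rw [hsingpi, Measure.pi_pi]
  -- compare the products
  rw [Finset.prod_image (fun x hx y hy hxy => e.injective hxy)]
  rw [Finset.prod_coe_sort_eq_attach, ← Finset.prod_attach s (fun x => bern p {c (e x)})]
  refine Finset.prod_congr rfl fun x _ => ?_
  congr 1
  rw [hc]
  simp [Equiv.symm_apply_apply]

end Assemble

/-- **Benjamini–Schramm:** if there is a fibration from `Λ` to `S`, then
`p_c^site(Λ) ≤ p_c^site(S)`. -/
theorem stmt15 {VL VS : Type*} [Countable VL] [Countable VS]
    (Λ : SimpleGraph VL) (S : SimpleGraph VS)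
    [∀ v, Fintype (Λ.neighborSet v)] [∀ v, Fintype (S.neighborSet v)]
    (π : VL → VS) (hπ : IsFibration Λ S π) :
    pcSite Λ ≤ pcSite S := by
  classical
  apply sSup_le_sSup
  rintro p ⟨hp1, hΛ⟩
  refine ⟨hp1, ?_⟩
  intro Q hQ
  haveI := hQ.1
  have hperc : {ω : VS → Bool | sitePercolates S ω}
      = ⋃ v : VS, {ω | (siteCluster S ω v).Infinite} := by
    ext ω
    simp [sitePercolates, Set.mem_iUnion]
  rw [hperc, measure_iUnion_null_iff]
  intro v
  rcases finite_or_infinite VS with hfin | hinf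
  · have hempty : {ω : VS → Bool | (siteCluster S ω v).Infinite} = ∅ := by
      ext ω
      simp only [Set.mem_setOf_eq, Set.mem_empty_iff_false, iff_false]
      exact Set.not_infinite.mpr (Set.toFinite _)
    rw [hempty]
    exact measure_empty
  · haveI : Infinite VL := Infinite.of_surjective π hπ.1
    haveI := Encodable.ofCountable VL
    haveI := Encodable.ofCountable VS
    haveI := Denumerable.ofEncodableOfInfinite VL
    haveI := Denumerable.ofEncodableOfInfinite VS
    let e : VL ≃ VS := (Denumerable.eqv VL).trans (Denumerable.eqv VS).symm
    have hP : iidMarginals p (Q.map (fun ω (x : VL) => ω (e x))) := iid_map_equiv hQ hp1 e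
    set P : Measure (VL → Bool) := Q.map (fun ω (x : VL) => ω (e x)) with hPdef
    haveI := hP.1
    have h0 : P {ω | sitePercolates Λ ω} = 0 := hΛ P hP
    obtain ⟨x0, hx0⟩ := hπ.1 v
    set A : ℕ → Set (VS → Bool) := fun m => {ω | hasGe m (dset S ([v] : List VS) ∅ ω)} with hA
    set Bv : ℕ → Set (VL → Bool) := fun m => {ω | hasGe m (dset Λ ([x0] : List VL) ∅ ω)} with hB
    have hAB : ∀ m, Q (A m) ≤ P (Bv m) := by
      intro m
      have h := key_lemma hQ hP hp1 hπ.2 m ([x0] : List VL) ∅ ∅ (by simp)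
      rw [show ([x0] : List VL).map π = ([π x0] : List VS) from rfl, hx0] at h
      exact h
    have hQt : Filter.Tendsto (fun m => Q (A m)) Filter.atTop (nhds (Q (⋂ m, A m))) := by
      refine tendsto_measure_iInter_atTop
        (fun m => (measurableSet_dset_event' m _ _).nullMeasurableSet) ?_
        ⟨0, measure_ne_top _ _⟩
      intro m n hmn ω hω
      exact hω.anti hmn
    have hPt : Filter.Tendsto (fun m => P (Bv m)) Filter.atTop (nhds (P (⋂ m, Bv m))) := by
      refine tendsto_measure_iInter_atTop
        (fun m => (measurableSet_dset_event' m _ _).nullMeasurableSet) ?_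
        ⟨0, measure_ne_top _ _⟩
      intro m n hmn ω hω
      exact hω.anti hmn
    have hle : Q (⋂ m, A m) ≤ P (⋂ m, Bv m) := le_of_tendsto_of_tendsto' hQt hPt hAB
    have hArw : {ω : VS → Bool | (siteCluster S ω v).Infinite} = ⋂ m, A m := by
      ext ω
      simp only [Set.mem_setOf_eq, Set.mem_iInter, hA]
      rw [show (siteCluster S ω v) = dset S ([v] : List VS) ∅ ω from dset_singleton.symm]
      exact infinite_iff_forall_hasGe
    have hBsub : (⋂ m, Bv m) ⊆ {ω : VL → Bool | sitePercolates Λ ω} := by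
      intro ω hω
      refine ⟨x0, ?_⟩
      rw [show (siteCluster Λ ω x0) = dset Λ ([x0] : List VL) ∅ ω from dset_singleton.symm,
        infinite_iff_forall_hasGe]
      intro m
      exact Set.mem_iInter.mp hω m
    rw [hArw]
    have hfinal : P (⋂ m, Bv m) ≤ 0 := h0 ▸ measure_mono hBsub
    exact le_antisymm (hle.trans hfinal) zero_le
end
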